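/- arXiv:2403.04589 — 7 statements merged into one kernel-verified Lean document; each statement's English description precedes it below -/
import Mathlib

section
/- Let 𝒯 = (T, λ) be a temporal oriented tree and let u, v, w, x be four vertices of 𝒯 such that there exists a temporal path from u to v and a temporal path from w to x, and every temporal path from u to v shares at least one vertex with every temporal path from w to x. Then there is a temporal path from u to x, or a temporal path from w to v. -/
/-! A temporal digraph on vertex set `V` is encoded by its arc-labeling
`lab : V → V → Finset ℕ`: there is an arc `u → v` iff `lab u v` is nonempty,
and `lab u v` is the (finite) set of time-steps at which the arc `u → v` is active. -/

/-- A temporal (directed) path: vertices `verts 0, …, verts len`, pairwise distinct,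
traversed at strictly increasing times `times 0 < … < times (len-1)`, each arc being
active at the time it is traversed. A single vertex (`len = 0`) is a temporal path. -/
structure TPath {V : Type*} (lab : V → V → Finset ℕ) where
  len : ℕ
  verts : Fin (len + 1) → V
  times : Fin len → ℕ
  inj : Function.Injective verts
  mono : StrictMono times
  mem_lab : ∀ i : Fin len, times i ∈ lab (verts i.castSucc) (verts i.succ)

/-- The set of vertices lying on a temporal path. -/
def TPath.vertexSet {V : Type*} {lab : V → V → Finset ℕ} (P : TPath lab) : Set V :=
  Set.range P.verts

/-- `P` is a temporal path from `u` to `v`. -/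
def TPath.FromTo {V : Type*} {lab : V → V → Finset ℕ} (P : TPath lab) (u v : V) : Prop :=
  P.verts 0 = u ∧ P.verts (Fin.last P.len) = v

/-- Two vertices are temporally connected if some temporal path contains both of them. -/
def TempConnected {V : Type*} (lab : V → V → Finset ℕ) (u v : V) : Prop :=
  ∃ P : TPath lab, u ∈ P.vertexSet ∧ v ∈ P.vertexSet

/-- A temporal antichain: a set of pairwise not temporally connected vertices. -/
def IsTempAntichain {V : Type*} (lab : V → V → Finset ℕ) (S : Set V) : Prop :=
  S.Pairwise fun u v => ¬ TempConnected lab u v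

/-- A family of temporal paths is a temporal path cover if every vertex lies on some path. -/
def IsTPC {V : Type*} (lab : V → V → Finset ℕ) {m : ℕ} (C : Fin m → TPath lab) : Prop :=
  ∀ v : V, ∃ i, v ∈ (C i).vertexSet

/-- Two temporal paths are temporally disjoint if any two of their arcs sharing an
end-vertex are traversed at distinct time-steps. -/
def TDisjoint {V : Type*} {lab : V → V → Finset ℕ} (P Q : TPath lab) : Prop :=
  ∀ i : Fin P.len, ∀ j : Fin Q.len,
    (P.verts i.castSucc = Q.verts j.castSucc ∨ P.verts i.castSucc = Q.verts j.succ ∨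
     P.verts i.succ = Q.verts j.castSucc ∨ P.verts i.succ = Q.verts j.succ) →
    P.times i ≠ Q.times j

/-- The set of possible cardinalities of temporal path covers. -/
def tpcSizes {V : Type*} (lab : V → V → Finset ℕ) : Set ℕ :=
  {m | ∃ C : Fin m → TPath lab, IsTPC lab C}

/-- The set of possible cardinalities of temporally disjoint path covers. -/
def tdpcSizes {V : Type*} (lab : V → V → Finset ℕ) : Set ℕ :=
  {m | ∃ C : Fin m → TPath lab, IsTPC lab C ∧ ∀ i j, i ≠ j → TDisjoint (C i) (C j)}

/-- The set of possible cardinalities of temporal antichains. -/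
def antichainSizes {V : Type*} (lab : V → V → Finset ℕ) : Set ℕ :=
  {m | ∃ S : Finset V, S.card = m ∧ IsTempAntichain lab ↑S}

/-- The underlying undirected graph (forget orientations and labels). -/
def underlyingGraph {V : Type*} (lab : V → V → Finset ℕ) : SimpleGraph V where
  Adj u v := u ≠ v ∧ ((lab u v).Nonempty ∨ (lab v u).Nonempty)
  symm := by constructor; intro u v h; exact ⟨h.1.symm, h.2.symm⟩
  loopless := by constructor; intro v h; exact h.1 rfl

/-- All time labels are positive integers. -/
def PositiveLabels {V : Type*} (lab : V → V → Finset ℕ) : Prop :=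
  ∀ u v : V, ∀ t ∈ lab u v, 0 < t

/-- A temporal oriented tree: the underlying undirected graph is a tree and the digraph is
an orientation of it (no pair of opposite arcs, no loops). -/
def IsTemporalOrientedTree {V : Type*} (lab : V → V → Finset ℕ) : Prop :=
  (underlyingGraph lab).IsTree ∧ ∀ u v : V, (lab u v).Nonempty → lab v u = ∅

/-- The connectivity graph: two distinct vertices are adjacent iff temporally connected. -/
def connGraph {V : Type*} (lab : V → V → Finset ℕ) : SimpleGraph V where
  Adj u v := u ≠ v ∧ TempConnected lab u v
  symm := by constructor; intro u v h; exact ⟨h.1.symm, h.2.imp fun P hP => ⟨hP.2, hP.1⟩⟩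
  loopless := by constructor; intro v h; exact h.1 rfl

/-- `c` lists the vertices of an induced cycle of length `n` of `G`, in cyclic order:
the listed vertices are distinct and two of them are adjacent iff they are cyclically
consecutive. -/
def IsInducedCycle {V : Type*} (G : SimpleGraph V) (n : ℕ) (c : Fin n → V) : Prop :=
  Function.Injective c ∧
    ∀ i j : Fin n, G.Adj (c i) (c j) ↔ ((i.val + 1) % n = j.val ∨ (j.val + 1) % n = i.val)

/-- A hole: an induced cycle of length at least 5. -/
def HasHole {V : Type*} (G : SimpleGraph V) : Prop :=
  ∃ n, 5 ≤ n ∧ ∃ c : Fin n → V, IsInducedCycle G n c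

/-- An anti-hole: an induced subgraph whose complement is a cycle of length at least 5. -/
def HasAntihole {V : Type*} (G : SimpleGraph V) : Prop :=
  ∃ n, 5 ≤ n ∧ ∃ c : Fin n → V, IsInducedCycle Gᶜ n c

/-- A graph is weakly chordal if it has no hole and no anti-hole. -/
def WeaklyChordal {V : Type*} (G : SimpleGraph V) : Prop :=
  ¬ HasHole G ∧ ¬ HasAntihole G

lemma tpath_concat {V : Type*} {lab : V → V → Finset ℕ} (P Q : TPath lab)
    (i0 j1 : ℕ) (hi : i0 ≤ P.len) (hj : j1 ≤ Q.len)
    (hjoin : P.verts ⟨i0, by omega⟩ = Q.verts ⟨j1, by omega⟩)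
    (hdisj : ∀ s : ℕ, (hs : s < i0) → ∀ t : ℕ, (ht1 : j1 ≤ t) → (ht2 : t ≤ Q.len) →
      P.verts ⟨s, by omega⟩ ≠ Q.verts ⟨t, by omega⟩)
    (htime : ∀ (h0 : 0 < i0) (h1 : j1 < Q.len), P.times ⟨i0 - 1, by omega⟩ < Q.times ⟨j1, h1⟩) :
    ∃ R : TPath lab, R.FromTo (P.verts 0) (Q.verts (Fin.last Q.len)) := by
  refine ⟨⟨i0 + (Q.len - j1),
    fun r => if h : r.val < i0 then P.verts ⟨r.val, by omega⟩
             else Q.verts ⟨j1 + (r.val - i0), by have := r.isLt; omega⟩,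
    fun r => if h : r.val < i0 then P.times ⟨r.val, by omega⟩
             else Q.times ⟨j1 + (r.val - i0), by have := r.isLt; omega⟩,
    ?_, ?_, ?_⟩, ?_, ?_⟩
  · -- inj
    intro r s hrs
    dsimp only at hrs
    split_ifs at hrs with h1 h2 h2
    · have := congrArg Fin.val (P.inj hrs)
      exact Fin.ext (by simpa using this)
    · exact absurd hrs (hdisj _ h1 _ (by omega) (by have := s.isLt; omega))
    · exact absurd hrs.symm (hdisj _ h2 _ (by omega) (by have := r.isLt; omega))
    · have := congrArg Fin.val (Q.inj hrs)
      simp only at this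
      exact Fin.ext (by omega)
  · -- mono
    intro r s hrs
    rw [Fin.lt_def] at hrs
    dsimp only
    split_ifs with h1 h2 h2
    · exact P.mono (show (⟨r.val, _⟩ : Fin P.len) < ⟨s.val, _⟩ by exact hrs)
    · have hj1lt : j1 < Q.len := by have := s.isLt; omega
      have key := htime (by omega) hj1lt
      calc P.times ⟨r.val, _⟩ ≤ P.times ⟨i0 - 1, by omega⟩ :=
            P.mono.monotone (by simp only [Fin.le_def]; omega)
        _ < Q.times ⟨j1, hj1lt⟩ := key
        _ ≤ Q.times ⟨j1 + (s.val - i0), _⟩ := Q.mono.monotone (by simp only [Fin.le_def]; omega)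
    · omega
    · exact Q.mono (show (⟨j1 + (r.val - i0), _⟩ : Fin Q.len) < ⟨j1 + (s.val - i0), _⟩ by
        simp [Fin.lt_def]; omega)
  · -- mem_lab
    intro r
    simp only [Fin.coe_castSucc, Fin.val_succ]
    split_ifs with h1 h2 h2
    · exact P.mem_lab ⟨r.val, by omega⟩
    · -- r.val < i0, r.val + 1 = i0
      have e : (⟨j1 + (r.val + 1 - i0), by have := r.isLt; omega⟩ : Fin (Q.len + 1))
          = ⟨j1, by omega⟩ := Fin.ext (by simp; omega)
      rw [e, ← hjoin]
      have e2 : (⟨i0, by omega⟩ : Fin (P.len + 1)) = ⟨r.val + 1, by omega⟩ :=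
        Fin.ext (by simp; omega)
      rw [e2]
      exact P.mem_lab ⟨r.val, by omega⟩
    · omega
    · have e : (⟨j1 + (r.val + 1 - i0), by have := r.isLt; omega⟩ : Fin (Q.len + 1))
          = ⟨(j1 + (r.val - i0)) + 1, by have := r.isLt; omega⟩ := Fin.ext (by simp; omega)
      rw [e]
      exact Q.mem_lab ⟨j1 + (r.val - i0), by have := r.isLt; omega⟩
  · -- start
    dsimp only
    split_ifs with h
    · exact congrArg P.verts (Fin.ext (by simp))
    · simp only [Fin.val_zero] at h
      have h0 : i0 = 0 := by omega
      have e : (⟨j1 + ((0:Fin (i0 + (Q.len - j1) + 1)).val - i0), by omega⟩ : Fin (Q.len + 1))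
          = ⟨j1, by omega⟩ := Fin.ext (by simp)
      rw [e, ← hjoin]
      exact congrArg P.verts (Fin.ext (by simp [h0]))
  · -- end
    dsimp only
    have hlast : (Fin.last (i0 + (Q.len - j1))).val = i0 + (Q.len - j1) := rfl
    split_ifs with h
    · omega
    · exact congrArg Q.verts (Fin.ext (by simp [Fin.last]; omega))

/-- If every temporal path from u to v intersects every temporal path from w to x
in a temporal oriented tree (and both such paths exist), then there is a temporal path
from u to x or one from w to v. -/
theorem intersecting_paths {V : Type*} [Fintype V] (lab : V → V → Finset ℕ)
    (hpos : PositiveLabels lab) (htree : IsTemporalOrientedTree lab) (u v w x : V)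
    (huv : ∃ P : TPath lab, P.FromTo u v) (hwx : ∃ Q : TPath lab, Q.FromTo w x)
    (hint : ∀ P Q : TPath lab, P.FromTo u v → Q.FromTo w x →
      (P.vertexSet ∩ Q.vertexSet).Nonempty) :
    (∃ R : TPath lab, R.FromTo u x) ∨ (∃ R : TPath lab, R.FromTo w v) := by

  classical
  obtain ⟨P, hPuv⟩ := huv
  obtain ⟨Q, hQwx⟩ := hwx
  obtain ⟨z, hzP, hzQ⟩ := hint P Q hPuv hQwx
  obtain ⟨ip, hip⟩ := hzP
  obtain ⟨iq, hiq⟩ := hzQ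
  -- minimal P-index of a common vertex
  set SP : Finset (Fin (P.len + 1)) :=
    Finset.univ.filter (fun i => ∃ j, Q.verts j = P.verts i) with hSP
  have hSPne : SP.Nonempty := by
    refine ⟨ip, ?_⟩
    simp only [hSP, Finset.mem_filter, Finset.mem_univ, true_and]
    exact ⟨iq, by rw [hiq, hip]⟩
  set i0 : Fin (P.len + 1) := SP.min' hSPne with hi0def
  have hi0mem : ∃ j, Q.verts j = P.verts i0 := by
    have := SP.min'_mem hSPne
    simpa only [hSP, Finset.mem_filter, Finset.mem_univ, true_and] using this
  obtain ⟨j1, hj1⟩ := hi0mem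
  have hi0min : ∀ i : Fin (P.len + 1), (∃ j, Q.verts j = P.verts i) → i0 ≤ i := by
    intro i hi
    exact SP.min'_le i (by simp only [hSP, Finset.mem_filter, Finset.mem_univ, true_and]; exact hi)
  -- minimal Q-index of a common vertex
  set SQ : Finset (Fin (Q.len + 1)) :=
    Finset.univ.filter (fun j => ∃ i, P.verts i = Q.verts j) with hSQ
  have hSQne : SQ.Nonempty := by
    refine ⟨iq, ?_⟩
    simp only [hSQ, Finset.mem_filter, Finset.mem_univ, true_and]
    exact ⟨ip, by rw [hip, hiq]⟩
  set j0 : Fin (Q.len + 1) := SQ.min' hSQne with hj0def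
  have hj0mem : ∃ i, P.verts i = Q.verts j0 := by
    have := SQ.min'_mem hSQne
    simpa only [hSQ, Finset.mem_filter, Finset.mem_univ, true_and] using this
  obtain ⟨i1, hi1⟩ := hj0mem
  have hj0min : ∀ j : Fin (Q.len + 1), (∃ i, P.verts i = Q.verts j) → j0 ≤ j := by
    intro j hjm
    exact SQ.min'_le j (by simp only [hSQ, Finset.mem_filter, Finset.mem_univ, true_and]; exact hjm)
  have hi0le : i0 ≤ i1 := hi0min i1 ⟨j0, hi1.symm⟩
  have hj0le : j0 ≤ j1 := hj0min j1 ⟨i0, hj1.symm⟩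
  have hi0v : i0.val ≤ P.len := by omega
  have hj1v : j1.val ≤ Q.len := by omega
  by_cases hkey : ∀ (h0 : 0 < i0.val) (h1 : j1.val < Q.len),
      P.times ⟨i0.val - 1, by omega⟩ < Q.times ⟨j1.val, h1⟩
  · left
    have := tpath_concat P Q i0.val j1.val hi0v hj1v
      (by rw [show (⟨i0.val, by omega⟩ : Fin (P.len + 1)) = i0 from rfl,
              show (⟨j1.val, by omega⟩ : Fin (Q.len + 1)) = j1 from rfl]; exact hj1.symm)
      (by intro s hs t ht1 ht2 heq
          have := hi0min ⟨s, by omega⟩ ⟨⟨t, by omega⟩, heq.symm⟩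
          rw [Fin.le_def] at this
          simp only at this
          omega)
      hkey
    rwa [hPuv.1, hQwx.2] at this
  · right
    push_neg at hkey
    obtain ⟨h0, h1, hle⟩ := hkey
    rw [Fin.le_def] at hi0le hj0le
    have hi1v : i1.val ≤ P.len := by omega
    have hj0v : j0.val ≤ Q.len := by omega
    have hkey2 : ∀ (h0' : 0 < j0.val) (h1' : i1.val < P.len),
        Q.times ⟨j0.val - 1, by omega⟩ < P.times ⟨i1.val, h1'⟩ := by
      intro h0' h1'
      by_contra hc
      push_neg at hc
      have c1 : P.times ⟨i0.val - 1, by omega⟩ < P.times ⟨i1.val, h1'⟩ :=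
        P.mono (by rw [Fin.lt_def]; simp only; omega)
      have c2 : Q.times ⟨j0.val - 1, by omega⟩ < Q.times ⟨j1.val, h1⟩ :=
        Q.mono (by rw [Fin.lt_def]; simp only; omega)
      omega
    have := tpath_concat Q P j0.val i1.val hj0v hi1v
      (by rw [show (⟨j0.val, by omega⟩ : Fin (Q.len + 1)) = j0 from rfl,
              show (⟨i1.val, by omega⟩ : Fin (P.len + 1)) = i1 from rfl]; exact hi1.symm)
      (by intro s hs t ht1 ht2 heq
          have := hj0min ⟨s, by omega⟩ ⟨⟨t, by omega⟩, heq.symm⟩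
          rw [Fin.le_def] at this
          simp only at this
          omega)
      hkey2
    rwa [hQwx.1, hPuv.2] at this
end

section
/- Let 𝒯 = (T, λ) be a temporal oriented tree, let G be its connectivity graph, and let H be an induced cycle of G of length at least 4. Then for every vertex v of H and every arc a of T incident with v, all vertices of H other than v lie in the same connected component of T with the arc a removed. -/
private lemma tpath_reach_aux {V : Type*} {lab : V → V → Finset ℕ} (x y : V)
    (P : TPath lab) (p : Fin (P.len + 1)) :
    ((underlyingGraph lab).deleteEdges {s(x, y)}).Reachable (P.verts 0) (P.verts p) ∨
      (x ∈ P.vertexSet ∧ y ∈ P.vertexSet) := by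
  induction p using Fin.induction with
  | zero => exact Or.inl (SimpleGraph.Reachable.refl _)
  | succ i ih =>
    rcases ih with h | h
    · have hne : P.verts i.castSucc ≠ P.verts i.succ := by
        intro he
        exact absurd (P.inj he) (Fin.ne_of_lt Fin.castSucc_lt_succ)
      have hadj : (underlyingGraph lab).Adj (P.verts i.castSucc) (P.verts i.succ) :=
        ⟨hne, Or.inl ⟨P.times i, P.mem_lab i⟩⟩
      by_cases hs : s(P.verts i.castSucc, P.verts i.succ) = s(x, y)
      · rw [Sym2.eq_iff] at hs
        rcases hs with ⟨hx, hy⟩ | ⟨hy, hx⟩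
        · exact Or.inr ⟨⟨i.castSucc, hx⟩, ⟨i.succ, hy⟩⟩
        · exact Or.inr ⟨⟨i.succ, hx⟩, ⟨i.castSucc, hy⟩⟩
      · have hadj' : ((underlyingGraph lab).deleteEdges {s(x, y)}).Adj
            (P.verts i.castSucc) (P.verts i.succ) := by
          rw [SimpleGraph.deleteEdges_adj]
          exact ⟨hadj, by simpa using hs⟩
        exact Or.inl (h.trans hadj'.reachable)
    · exact Or.inr h

private lemma tconn_reach {V : Type*} {lab : V → V → Finset ℕ} (x y u w : V)
    (h : TempConnected lab u w) :
    ((underlyingGraph lab).deleteEdges {s(x, y)}).Reachable u w ∨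
      ∃ P : TPath lab, u ∈ P.vertexSet ∧ w ∈ P.vertexSet ∧
        x ∈ P.vertexSet ∧ y ∈ P.vertexSet := by
  obtain ⟨P, hu, hw⟩ := h
  obtain ⟨p, hp⟩ := hu
  obtain ⟨q, hq⟩ := hw
  rcases tpath_reach_aux x y P p with h1 | h1
  · rcases tpath_reach_aux x y P q with h2 | h2
    · exact Or.inl (hp ▸ hq ▸ h1.symm.trans h2)
    · exact Or.inr ⟨P, ⟨p, hp⟩, ⟨q, hq⟩, h2⟩
  · exact Or.inr ⟨P, ⟨p, hp⟩, ⟨q, hq⟩, h1⟩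

open Fin.NatCast

/-- For an induced cycle of length ≥ 4 in the connectivity graph of a temporal oriented
tree, every vertex v of the cycle and arc a of the tree incident with v: all vertices of the
cycle other than v lie in the same connected component of the tree with the arc removed. -/
theorem cycle_vertices_same_component {V : Type*} [Fintype V] (lab : V → V → Finset ℕ)
    (hpos : PositiveLabels lab) (htree : IsTemporalOrientedTree lab)
    (n : ℕ) (hn : 4 ≤ n) (c : Fin n → V) (hc : IsInducedCycle (connGraph lab) n c)
    (i0 : Fin n) (x y : V) (harc : (lab x y).Nonempty) (hinc : x = c i0 ∨ y = c i0) :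
    ∀ j k : Fin n, j ≠ i0 → k ≠ i0 →
      ((underlyingGraph lab).deleteEdges {s(x, y)}).Reachable (c j) (c k) := by
  haveI : NeZero n := ⟨by omega⟩
  set G' := (underlyingGraph lab).deleteEdges {s(x, y)} with hG'
  -- basic Fin arithmetic facts
  have hvadd : ∀ a : Fin n, ((a + 1 : Fin n) : ℕ) = (a.val + 1) % n := by
    intro a
    rw [Fin.val_add, Fin.val_one', Nat.mod_eq_of_lt (show 1 < n by omega)]
  have hs : ∀ a : ℕ, a < n → ((a + 1) % n = a + 1 ∨ (a + 1 = n ∧ (a + 1) % n = 0)) := by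
    intro a ha
    rcases Nat.lt_or_ge (a + 1) n with h | h
    · exact Or.inl (Nat.mod_eq_of_lt h)
    · have he : a + 1 = n := by omega
      exact Or.inr ⟨he, by rw [he]; exact Nat.mod_self n⟩
  -- one step around the cycle avoiding i0
  have hstep : ∀ m : Fin n, m ≠ i0 → m + 1 ≠ i0 → G'.Reachable (c m) (c (m + 1)) := by
    intro m hm hm1
    have hadjG : (connGraph lab).Adj (c m) (c (m + 1)) :=
      (hc.2 m (m + 1)).mpr (Or.inl (hvadd m).symm)
    rcases tconn_reach x y (c m) (c (m + 1)) hadjG.2 with h | ⟨P, hu, hw, hx, hy⟩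
    · exact h
    · exfalso
      have hv : c i0 ∈ P.vertexSet := by
        rcases hinc with h | h
        · exact h ▸ hx
        · exact h ▸ hy
      have hA : (connGraph lab).Adj (c i0) (c m) :=
        ⟨fun he => hm (hc.1 he).symm, ⟨P, hv, hu⟩⟩
      have hB : (connGraph lab).Adj (c i0) (c (m + 1)) :=
        ⟨fun he => hm1 (hc.1 he).symm, ⟨P, hv, hw⟩⟩
      have hA' := (hc.2 i0 m).mp hA
      have hB' := (hc.2 i0 (m + 1)).mp hB
      rw [hvadd m] at hB'
      have hmne : m.val ≠ i0.val := fun he => hm (Fin.ext he)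
      have hm1ne : ((m + 1 : Fin n) : ℕ) ≠ i0.val := fun he => hm1 (Fin.ext he)
      rw [hvadd m] at hm1ne
      have h1 := hs m.val m.isLt
      have h2 := hs i0.val i0.isLt
      have h3 := hs ((m.val + 1) % n) (Nat.mod_lt _ (by omega))
      have hmlt := m.isLt
      have hilt := i0.isLt
      omega
  -- chaining steps
  have hchain : ∀ t : ℕ, 0 < t → t < n → G'.Reachable (c (i0 + 1)) (c (i0 + (t : Fin n))) := by
    intro t
    induction t with
    | zero => intro h; exact absurd rfl h.ne'
    | succ t ih =>
      intro _ hlt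
      by_cases ht : t = 0
      · subst ht
        rw [show ((0 + 1 : ℕ) : Fin n) = 1 by simp]
      · have h1 := ih (by omega) (by omega)
        have hne1 : i0 + (t : Fin n) ≠ i0 := by
          intro h
          have ht0 : (t : Fin n) = 0 := by
            have : i0 + (t : Fin n) = i0 + 0 := by rw [h, add_zero]
            exact add_left_cancel this
          have h2 : ((t : ℕ) : Fin n).val = (0 : Fin n).val := congrArg Fin.val ht0
          rw [Fin.val_natCast, Fin.val_zero, Nat.mod_eq_of_lt (by omega : t < n)] at h2
          omega
        have hne2 : i0 + (t : Fin n) + 1 ≠ i0 := by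
          intro h
          have ht0 : ((t + 1 : ℕ) : Fin n) = 0 := by
            have hc1 : ((t + 1 : ℕ) : Fin n) = (t : Fin n) + 1 := by push_cast; ring
            rw [hc1]
            have h3 : i0 + ((t : Fin n) + 1) = i0 + 0 := by rw [← add_assoc, h, add_zero]
            exact add_left_cancel h3
          have h2 : ((t + 1 : ℕ) : Fin n).val = (0 : Fin n).val := congrArg Fin.val ht0
          rw [Fin.val_natCast, Fin.val_zero, Nat.mod_eq_of_lt hlt] at h2
          omega
        have h2 := hstep (i0 + (t : Fin n)) hne1 hne2
        rw [show i0 + (t : Fin n) + 1 = i0 + ((t + 1 : ℕ) : Fin n) by push_cast; abel] at h2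
        exact h1.trans h2
  -- representation of any j ≠ i0
  have hrep : ∀ j : Fin n, j ≠ i0 → ∃ t : ℕ, 0 < t ∧ t < n ∧ j = i0 + (t : Fin n) := by
    intro j hj
    refine ⟨(j - i0).val, ?_, (j - i0).isLt, ?_⟩
    · rcases Nat.eq_zero_or_pos (j - i0).val with h | h
      · exfalso
        have : j - i0 = 0 := Fin.ext (by simpa using h)
        exact hj (by rwa [sub_eq_zero] at this)
      · exact h
    · rw [Fin.cast_val_eq_self]; abel
  intro j k hj hk
  obtain ⟨tj, htj1, htj2, htj3⟩ := hrep j hj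
  obtain ⟨tk, htk1, htk2, htk3⟩ := hrep k hk
  rw [htj3, htk3]
  exact (hchain tj htj1 htj2).symm.trans (hchain tk htk1 htk2)
end

section
/- Let 𝒯 = (T, λ) be a temporal oriented tree and let G be its connectivity graph. Then G contains no odd hole, i.e., no induced cycle of odd length at least 5. -/
/-! ### Auxiliary development for the odd-hole theorem -/

section OddHoleAux

variable {V : Type*}

open SimpleGraph

/-- A "segment": an injective sequence of vertices `f 0, …, f m` following arcs of the
temporal digraph, all of whose vertices are pairwise temporally connected, from `u` to `v`. -/
structure Seg (lab : V → V → Finset ℕ) (u v : V) where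
  m : ℕ
  f : ℕ → V
  inj : ∀ ⦃j j' : ℕ⦄, j ≤ m → j' ≤ m → f j = f j' → j = j'
  arc : ∀ j : ℕ, j < m → (lab (f j) (f (j + 1))).Nonempty
  conn : ∀ ⦃j j' : ℕ⦄, j ≤ m → j' ≤ m → TempConnected lab (f j) (f j')
  h0 : f 0 = u
  hm : f m = v

lemma seg_of_lt {lab : V → V → Finset ℕ} (P : TPath lab) (p q : Fin (P.len + 1)) (hpq : p < q) :
    Nonempty (Seg lab (P.verts p) (P.verts q)) := by
  have hq : q.val ≤ P.len := Nat.lt_succ_iff.mp q.isLt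
  have hpq' : p.val < q.val := hpq
  refine ⟨⟨q.val - p.val,
    fun j => P.verts ⟨min (p.val + j) P.len, Nat.lt_succ_of_le (min_le_right _ _)⟩,
    ?_, ?_, ?_, ?_, ?_⟩⟩
  · intro j j' hj hj' h
    have h1 : p.val + j ≤ P.len := by omega
    have h2 : p.val + j' ≤ P.len := by omega
    have h3 := congrArg Fin.val (P.inj h)
    simp only [min_eq_left h1, min_eq_left h2] at h3
    omega
  · intro j hj
    have h1 : p.val + j < P.len := by omega
    have h2 : p.val + j ≤ P.len := by omega
    have h3 : p.val + (j + 1) ≤ P.len := by omega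
    refine ⟨P.times ⟨p.val + j, h1⟩, ?_⟩
    have e1 : (⟨min (p.val + j) P.len, Nat.lt_succ_of_le (min_le_right _ _)⟩ : Fin (P.len + 1))
        = (⟨p.val + j, h1⟩ : Fin P.len).castSucc := by
      apply Fin.ext
      simp only [Fin.coe_castSucc]
      omega
    have e2 : (⟨min (p.val + (j + 1)) P.len, Nat.lt_succ_of_le (min_le_right _ _)⟩ :
        Fin (P.len + 1)) = (⟨p.val + j, h1⟩ : Fin P.len).succ := by
      apply Fin.ext
      simp only [Fin.val_succ]
      omega
    beta_reduce
    rw [e1, e2]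
    exact P.mem_lab ⟨p.val + j, h1⟩
  · intro j j' hj hj'
    exact ⟨P, ⟨_, rfl⟩, ⟨_, rfl⟩⟩
  · apply congrArg P.verts
    apply Fin.ext
    simp only []
    omega
  · apply congrArg P.verts
    apply Fin.ext
    simp only []
    omega

lemma exists_seg {lab : V → V → Finset ℕ} {u v : V} (h : TempConnected lab u v) (hne : u ≠ v) :
    Nonempty (Seg lab u v) ∨ Nonempty (Seg lab v u) := by
  obtain ⟨P, ⟨p, hp⟩, ⟨q, hq⟩⟩ := h
  rcases lt_trichotomy p q with h1 | h1 | h1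
  · left; rw [← hp, ← hq]; exact seg_of_lt P p q h1
  · exact absurd (by rw [← hp, ← hq, h1]) hne
  · right; rw [← hp, ← hq]; exact seg_of_lt P q p h1

lemma reach_of_fn (H : SimpleGraph V) (f : ℕ → V) (a : ℕ) :
    ∀ b, a ≤ b → (∀ j, a ≤ j → j < b → H.Adj (f j) (f (j + 1))) → H.Reachable (f a) (f b) := by
  intro b
  induction b with
  | zero =>
    intro hab _
    have ha : a = 0 := by omega
    subst ha
    exact Reachable.refl _
  | succ b ih =>
    intro hab hadj
    rcases eq_or_lt_of_le hab with h | h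
    · rw [← h]
    · have hab' : a ≤ b := by omega
      exact (ih hab' fun j h1 h2 => hadj j h1 (by omega)).trans
        (hadj b hab' (by omega)).reachable

lemma cyc_iff {n : ℕ} (hn : 2 ≤ n) (s : ZMod n → Prop) (i : ZMod n)
    (h : ∀ k, k ≠ i → (s k ↔ s (k + 1))) : s (i + 1) ↔ s i := by
  haveI : NeZero n := ⟨by omega⟩
  have key : ∀ m : ℕ, m ≤ n - 1 → (s (i + 1) ↔ s (i + 1 + (m : ZMod n))) := by
    intro m
    induction m with
    | zero => intro _; simp
    | succ m ih =>
      intro hm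
      have h1 := ih (by omega)
      have hne : i + 1 + (m : ZMod n) ≠ i := by
        intro hEq
        have h2 : i + (1 + (m : ZMod n)) = i + 0 := by
          rw [add_zero, ← add_assoc]; exact hEq
        have h3 : ((1 + m : ℕ) : ZMod n) = 0 := by
          push_cast
          exact add_left_cancel h2
        have h4 := congrArg ZMod.val h3
        rw [ZMod.val_cast_of_lt (by omega), ZMod.val_zero] at h4
        omega
      have h5 := h _ hne
      have h6 : i + 1 + ((m + 1 : ℕ) : ZMod n) = i + 1 + (m : ZMod n) + 1 := by
        push_cast; ring
      rw [h6]
      exact h1.trans h5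
  have h7 : i + 1 + ((n - 1 : ℕ) : ZMod n) = i := by
    have h8 : ((1 + (n - 1) : ℕ) : ZMod n) = 0 := by
      rw [show 1 + (n - 1) = n by omega]
      exact ZMod.natCast_self n
    calc i + 1 + ((n - 1 : ℕ) : ZMod n) = i + ((1 + (n - 1) : ℕ) : ZMod n) := by
          push_cast; ring
    _ = i := by rw [h8, add_zero]
  have := key (n - 1) le_rfl
  rw [h7] at this
  exact this

lemma flip_parity {n : ℕ} (hn : 2 ≤ n) (hodd : Odd n) (δ : ZMod n → Bool)
    (h : ∀ k, δ (k + 1) = ! δ k) : False := by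
  haveI : NeZero n := ⟨by omega⟩
  have key : ∀ m : ℕ, δ ((m : ZMod n)) = if m % 2 = 0 then δ 0 else ! δ 0 := by
    intro m
    induction m with
    | zero => simp
    | succ m ih =>
      have hc : ((m + 1 : ℕ) : ZMod n) = (m : ZMod n) + 1 := by push_cast; ring
      rw [hc, h, ih]
      rcases Nat.even_or_odd m with he | ho
      · have h1 : m % 2 = 0 := Nat.even_iff.mp he
        have h2 : (m + 1) % 2 = 1 := by omega
        simp [h1, h2]
      · have h1 : m % 2 = 1 := Nat.odd_iff.mp ho
        have h2 : (m + 1) % 2 = 0 := by omega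
        simp [h1, h2]
  have h1 := key n
  rw [ZMod.natCast_self] at h1
  have h2 : n % 2 = 1 := Nat.odd_iff.mp hodd
  rw [h2] at h1
  simp at h1

end OddHoleAux

/-- The connectivity graph of a temporal oriented tree contains no odd hole. -/
theorem connGraph_no_odd_hole {V : Type*} [Fintype V] (lab : V → V → Finset ℕ)
    (hpos : PositiveLabels lab) (htree : IsTemporalOrientedTree lab) :
    ¬ ∃ n : ℕ, 5 ≤ n ∧ Odd n ∧ ∃ c : Fin n → V, IsInducedCycle (connGraph lab) n c := by
  rintro ⟨n, hn5, hodd, c, hcinj, hadj⟩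
  haveI : NeZero n := ⟨by omega⟩
  classical
  -- re-index the cycle by `ZMod n`
  let ι : ZMod n → Fin n := fun z => ⟨z.val, ZMod.val_lt z⟩
  let c' : ZMod n → V := fun z => c (ι z)
  have hιinj : Function.Injective ι := by
    intro a b h
    exact ZMod.val_injective n (congrArg Fin.val h)
  have hc'inj : Function.Injective c' := fun a b h => hιinj (hcinj h)
  have hsucc_val : ∀ a : ZMod n, (a + 1).val = (a.val + 1) % n := by
    intro a
    rw [ZMod.val_add, ZMod.val_one'' (by omega : n ≠ 1)]
  have hA : ∀ a b : ZMod n, (connGraph lab).Adj (c' a) (c' b) ↔ (b = a + 1 ∨ a = b + 1) := by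
    intro a b
    rw [hadj (ι a) (ι b)]
    constructor
    · rintro (h | h)
      · left
        apply ZMod.val_injective n
        rw [hsucc_val]
        exact h.symm
      · right
        apply ZMod.val_injective n
        rw [hsucc_val]
        exact h.symm
    · rintro (rfl | rfl)
      · left; exact (hsucc_val a).symm
      · right; exact (hsucc_val b).symm
  have hconn_edge : ∀ k : ZMod n, TempConnected lab (c' k) (c' (k + 1)) := by
    intro k
    have h1 : (connGraph lab).Adj (c' k) (c' (k + 1)) := (hA k (k + 1)).mpr (Or.inl rfl)
    exact (show c' k ≠ c' (k + 1) ∧ TempConnected lab (c' k) (c' (k + 1)) from h1).2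
  have hcast_ne : ∀ m : ℕ, 0 < m → m < n → ((m : ℕ) : ZMod n) ≠ 0 := by
    intro m h1 h2 hEq
    have h3 := congrArg ZMod.val hEq
    rw [ZMod.val_cast_of_lt h2, ZMod.val_zero] at h3
    omega
  have haddne : ∀ (k : ZMod n) (m : ℕ), 0 < m → m < n → k + ((m : ℕ) : ZMod n) ≠ k := by
    intro k m h1 h2 hEq
    apply hcast_ne m h1 h2
    exact add_left_cancel (a := k) (by rw [add_zero]; exact hEq)
  have hne1 : ∀ k : ZMod n, k + 1 ≠ k := by
    intro k
    have := haddne k 1 (by omega) (by omega)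
    simpa using this
  have hBB : ∀ j k : ZMod n, TempConnected lab (c' j) (c' k) → j = k ∨ k = j + 1 ∨ j = k + 1 := by
    intro j k hconn
    by_cases hjk : j = k
    · exact Or.inl hjk
    · have h1 : (connGraph lab).Adj (c' j) (c' k) :=
        (⟨fun h => hjk (hc'inj h), hconn⟩ : c' j ≠ c' k ∧ TempConnected lab (c' j) (c' k))
      rcases (hA j k).mp h1 with h | h
      · exact Or.inr (Or.inl h)
      · exact Or.inr (Or.inr h)
  -- choose a segment (directed tree path) for every edge of the hole
  have hseg : ∀ k : ZMod n, ∃ b : Bool,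
      Nonempty (Seg lab (cond b (c' k) (c' (k + 1))) (cond b (c' (k + 1)) (c' k))) := by
    intro k
    have hne : c' k ≠ c' (k + 1) := fun h => hne1 k ((hc'inj h).symm)
    rcases exists_seg (hconn_edge k) hne with h | h
    · exact ⟨true, h⟩
    · exact ⟨false, h⟩
  choose δ hδ using hseg
  have E : ∀ k : ZMod n,
      Seg lab (cond (δ k) (c' k) (c' (k + 1))) (cond (δ k) (c' (k + 1)) (c' k)) :=
    fun k => (hδ k).some
  -- no vertex of the hole lies on a segment other than its two endpoints
  have hB : ∀ (k j : ZMod n) (t : ℕ), t ≤ (E k).m → (E k).f t = c' j → j = k ∨ j = k + 1 := by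
    intro k j t ht hfj
    have h1 := (E k).conn ht (Nat.zero_le _)
    have h2 := (E k).conn ht (le_refl (E k).m)
    rw [hfj, (E k).h0] at h1
    rw [hfj, (E k).hm] at h2
    have hck : TempConnected lab (c' j) (c' k) ∧ TempConnected lab (c' j) (c' (k + 1)) := by
      cases hbk : δ k
      · rw [hbk, Bool.cond_false] at h1 h2
        exact ⟨h2, h1⟩
      · rw [hbk, Bool.cond_true] at h1 h2
        exact ⟨h1, h2⟩
    rcases hBB j k hck.1 with h | h | h
    · exact Or.inl h
    · rcases hBB j (k + 1) hck.2 with h' | h' | h'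
      · exact Or.inr h'
      · exact Or.inl (add_right_cancel h').symm
      · exfalso
        rw [h'] at h
        apply haddne k 3 (by omega) (by omega)
        have h9 : k + ((3 : ℕ) : ZMod n) = k + 1 + 1 + 1 := by push_cast; ring
        rw [h9]
        exact h.symm
    · exact Or.inr h
  have hmpos : ∀ k : ZMod n, 1 ≤ (E k).m := by
    intro k
    by_contra h
    have hm0 : (E k).m = 0 := by omega
    have h1 := (E k).h0
    have h2 := (E k).hm
    rw [hm0, h1] at h2
    cases hbk : δ k
    · rw [hbk] at h2
      simp only [Bool.cond_false] at h2
      exact hne1 k (hc'inj h2)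
    · rw [hbk] at h2
      simp only [Bool.cond_true] at h2
      exact hne1 k (hc'inj h2.symm)
  -- the crucial alternation of directions around the hole
  have hflip : ∀ i : ZMod n, δ (i + 1) = ! δ i := by
    intro i
    set C1 : V := c' (i + 1) with hC1def
    -- main step: the terminal edge {y, C1} of segment i also occurs on segment i+1
    have main : ∀ y : V, y ≠ C1 → (underlyingGraph lab).Adj y C1 →
        ((underlyingGraph lab) \ SimpleGraph.fromEdgeSet {s(y, C1)}).Reachable (c' i) y →
        ∃ jj, jj < (E (i + 1)).m ∧
          (((E (i + 1)).f jj = y ∧ (E (i + 1)).f (jj + 1) = C1) ∨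
           ((E (i + 1)).f jj = C1 ∧ (E (i + 1)).f (jj + 1) = y)) := by
      intro y hyne hyadj hreach
      by_contra hocc
      set G' : SimpleGraph V := (underlyingGraph lab) \ SimpleGraph.fromEdgeSet {s(y, C1)}
        with hG'
      have hbridge : ¬ G'.Reachable y C1 := by
        have hacyc : (underlyingGraph lab).IsAcyclic := htree.1.2
        have hb := (SimpleGraph.isAcyclic_iff_forall_adj_isBridge.mp hacyc) hyadj
        exact SimpleGraph.isBridge_iff.mp hb
      have hadjG' : ∀ (k : ZMod n) (jj : ℕ), jj < (E k).m →
          ((E k).f jj ≠ y ∨ (E k).f (jj + 1) ≠ C1) →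
          ((E k).f jj ≠ C1 ∨ (E k).f (jj + 1) ≠ y) →
          G'.Adj ((E k).f jj) ((E k).f (jj + 1)) := by
        intro k jj hjj hx1 hx2
        have harc := (E k).arc jj hjj
        have hnejj : (E k).f jj ≠ (E k).f (jj + 1) := by
          intro h
          have := (E k).inj (by omega) (by omega) h
          omega
        rw [hG', SimpleGraph.sdiff_adj, SimpleGraph.fromEdgeSet_adj]
        refine ⟨⟨hnejj, Or.inl harc⟩, ?_⟩
        rintro ⟨hmem, -⟩
        rw [Set.mem_singleton_iff, Sym2.eq_iff] at hmem
        rcases hmem with ⟨h1, h2⟩ | ⟨h1, h2⟩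
        · rcases hx1 with h | h
          · exact h h1
          · exact h h2
        · rcases hx2 with h | h
          · exact h h1
          · exact h h2
      have hseg_reach : ∀ k : ZMod n, k ≠ i → k ≠ i + 1 →
          G'.Reachable (c' k) (c' (k + 1)) := by
        intro k hk1 hk2
        have hCnot : ∀ t, t ≤ (E k).m → (E k).f t ≠ C1 := by
          intro t ht hEq
          rcases hB k (i + 1) t ht hEq with h | h
          · exact hk2 h.symm
          · exact hk1 (add_right_cancel h).symm
        have hr := reach_of_fn G' ((E k).f) 0 ((E k).m) (Nat.zero_le _)
          (fun jj h1 h2 => hadjG' k jj h2 (Or.inr (hCnot (jj + 1) (by omega)))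
            (Or.inl (hCnot jj (by omega))))
        rw [(E k).h0, (E k).hm] at hr
        cases hbk : δ k
        · rw [hbk, Bool.cond_false] at hr
          exact hr.symm
        · rw [hbk, Bool.cond_true] at hr
          exact hr
      have hr1 : G'.Reachable (c' (i + 1)) (c' (i + 1 + 1)) := by
        have hstep1 : ∀ jj, 0 ≤ jj → jj < (E (i + 1)).m →
            G'.Adj ((E (i + 1)).f jj) ((E (i + 1)).f (jj + 1)) := by
          intro jj _ h2
          apply hadjG' (i + 1) jj h2
          · by_cases hh : (E (i + 1)).f jj = y ∧ (E (i + 1)).f (jj + 1) = C1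
            · exact absurd ⟨jj, h2, Or.inl hh⟩ hocc
            · rcases not_and_or.mp hh with h | h
              · exact Or.inl h
              · exact Or.inr h
          · by_cases hh : (E (i + 1)).f jj = C1 ∧ (E (i + 1)).f (jj + 1) = y
            · exact absurd ⟨jj, h2, Or.inr hh⟩ hocc
            · rcases not_and_or.mp hh with h | h
              · exact Or.inl h
              · exact Or.inr h
        have hr := reach_of_fn G' ((E (i + 1)).f) 0 ((E (i + 1)).m) (Nat.zero_le _) hstep1
        rw [(E (i + 1)).h0, (E (i + 1)).hm] at hr
        cases hbk : δ (i + 1)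
        · rw [hbk, Bool.cond_false] at hr
          exact hr.symm
        · rw [hbk, Bool.cond_true] at hr
          exact hr
      have hstep : ∀ k : ZMod n, k ≠ i →
          (G'.Reachable (c' k) C1 ↔ G'.Reachable (c' (k + 1)) C1) := by
        intro k hk
        by_cases hk2 : k = i + 1
        · subst hk2
          constructor
          · intro h
            exact hr1.symm.trans h
          · intro _
            exact SimpleGraph.Reachable.refl C1
        · have hr2 := hseg_reach k hk hk2
          exact ⟨fun h => hr2.symm.trans h, fun h => hr2.trans h⟩
      have hkey := cyc_iff (show 2 ≤ n by omega)
        (fun k : ZMod n => G'.Reachable (c' k) C1) i hstep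
      have hsI : G'.Reachable (c' i) C1 := by
        apply hkey.mp
        show G'.Reachable (c' (i + 1)) C1
        exact SimpleGraph.Reachable.refl C1
      exact hbridge (hreach.symm.trans hsI)
    -- now apply `main` to the terminal edge of segment i
    have hm1 : 1 ≤ (E i).m := hmpos i
    cases hbi : δ i
    · -- δ i = false : segment i runs from c' (i+1) to c' i
      have hEi0 : (E i).f 0 = C1 := by
        refine ((E i).h0).trans ?_
        simp [hbi, hC1def]
      have hEim : (E i).f (E i).m = c' i := by
        refine ((E i).hm).trans ?_
        simp [hbi, hC1def]
      set y : V := (E i).f 1 with hydef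
      have harc0 : (lab C1 y).Nonempty := by
        have h := (E i).arc 0 (by omega)
        rw [hEi0] at h
        exact h
      have hyne : y ≠ C1 := by
        intro h
        rw [hydef, ← hEi0] at h
        have := (E i).inj (by omega) (Nat.zero_le _) h
        omega
      have hyadj : (underlyingGraph lab).Adj y C1 :=
        (⟨hyne, Or.inr harc0⟩ : y ≠ C1 ∧ ((lab y C1).Nonempty ∨ (lab C1 y).Nonempty))
      have hCnot : ∀ t, 1 ≤ t → t ≤ (E i).m → (E i).f t ≠ C1 := by
        intro t h1 h2 hEq
        rw [← hEi0] at hEq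
        have := (E i).inj h2 (Nat.zero_le _) hEq
        omega
      have hadjstep : ∀ jj, 1 ≤ jj → jj < (E i).m →
          ((underlyingGraph lab) \ SimpleGraph.fromEdgeSet {s(y, C1)}).Adj
            ((E i).f jj) ((E i).f (jj + 1)) := by
        intro jj h1 h2
        have harc := (E i).arc jj h2
        have hnejj : (E i).f jj ≠ (E i).f (jj + 1) := by
          intro h
          have := (E i).inj (by omega) (by omega) h
          omega
        rw [SimpleGraph.sdiff_adj, SimpleGraph.fromEdgeSet_adj]
        refine ⟨⟨hnejj, Or.inl harc⟩, ?_⟩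
        rintro ⟨hmem, -⟩
        rw [Set.mem_singleton_iff, Sym2.eq_iff] at hmem
        rcases hmem with ⟨h3, h4⟩ | ⟨h3, h4⟩
        · exact hCnot (jj + 1) (by omega) (by omega) h4
        · exact hCnot jj (by omega) (by omega) h3
      have hreach : ((underlyingGraph lab) \ SimpleGraph.fromEdgeSet {s(y, C1)}).Reachable
          (c' i) y := by
        have hr := reach_of_fn _ ((E i).f) 1 ((E i).m) hm1 hadjstep
        rw [hEim] at hr
        exact hr.symm
      obtain ⟨jj, hjj, hor⟩ := main y hyne hyadj hreach
      cases hbi1 : δ (i + 1)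
      · -- δ (i+1) = false : contradiction
        exfalso
        have hE1m : (E (i + 1)).f (E (i + 1)).m = C1 := by
          refine ((E (i + 1)).hm).trans ?_
          simp [hbi1, hC1def]
        rcases hor with ⟨h1, h2⟩ | ⟨h1, h2⟩
        · have harc := (E (i + 1)).arc jj hjj
          rw [h1, h2] at harc
          have hempty := htree.2 C1 y harc0
          rw [hempty] at harc
          exact Finset.not_nonempty_empty harc
        · have hjm : jj = (E (i + 1)).m := by
            apply (E (i + 1)).inj (by omega) (le_refl _)
            rw [h1, hE1m]
          omega
      · rfl
    · -- δ i = true : segment i runs from c' i to c' (i+1)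
      have hEi0 : (E i).f 0 = c' i := by
        refine ((E i).h0).trans ?_
        simp [hbi, hC1def]
      have hEim : (E i).f (E i).m = C1 := by
        refine ((E i).hm).trans ?_
        simp [hbi, hC1def]
      set y : V := (E i).f ((E i).m - 1) with hydef
      have harc0 : (lab y C1).Nonempty := by
        have h := (E i).arc ((E i).m - 1) (by omega)
        rw [show (E i).m - 1 + 1 = (E i).m by omega, hEim] at h
        exact h
      have hyne : y ≠ C1 := by
        intro h
        rw [hydef, ← hEim] at h
        have := (E i).inj (by omega) (le_refl _) h
        omega
      have hyadj : (underlyingGraph lab).Adj y C1 :=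
        (⟨hyne, Or.inl harc0⟩ : y ≠ C1 ∧ ((lab y C1).Nonempty ∨ (lab C1 y).Nonempty))
      have hCnot : ∀ t, t ≤ (E i).m - 1 → (E i).f t ≠ C1 := by
        intro t h1 hEq
        rw [← hEim] at hEq
        have := (E i).inj (by omega) (le_refl _) hEq
        omega
      have hadjstep : ∀ jj, 0 ≤ jj → jj < (E i).m - 1 →
          ((underlyingGraph lab) \ SimpleGraph.fromEdgeSet {s(y, C1)}).Adj
            ((E i).f jj) ((E i).f (jj + 1)) := by
        intro jj _ h2
        have harc := (E i).arc jj (by omega)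
        have hnejj : (E i).f jj ≠ (E i).f (jj + 1) := by
          intro h
          have := (E i).inj (by omega) (by omega) h
          omega
        rw [SimpleGraph.sdiff_adj, SimpleGraph.fromEdgeSet_adj]
        refine ⟨⟨hnejj, Or.inl harc⟩, ?_⟩
        rintro ⟨hmem, -⟩
        rw [Set.mem_singleton_iff, Sym2.eq_iff] at hmem
        rcases hmem with ⟨h3, h4⟩ | ⟨h3, h4⟩
        · exact hCnot (jj + 1) (by omega) h4
        · exact hCnot jj (by omega) h3
      have hreach : ((underlyingGraph lab) \ SimpleGraph.fromEdgeSet {s(y, C1)}).Reachable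
          (c' i) y := by
        have hr := reach_of_fn _ ((E i).f) 0 ((E i).m - 1) (Nat.zero_le _) hadjstep
        rw [hEi0] at hr
        exact hr
      obtain ⟨jj, hjj, hor⟩ := main y hyne hyadj hreach
      cases hbi1 : δ (i + 1)
      · rfl
      · -- δ (i+1) = true : contradiction
        exfalso
        have hE10 : (E (i + 1)).f 0 = C1 := by
          refine ((E (i + 1)).h0).trans ?_
          simp [hbi1, hC1def]
        rcases hor with ⟨h1, h2⟩ | ⟨h1, h2⟩
        · have hj1 : jj + 1 = 0 := by
            apply (E (i + 1)).inj (by omega) (Nat.zero_le _)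
            rw [h2, hE10]
          omega
        · have harc := (E (i + 1)).arc jj hjj
          rw [h1, h2] at harc
          have hempty := htree.2 y C1 harc0
          rw [hempty] at harc
          exact Finset.not_nonempty_empty harc
  exact flip_parity (by omega) hodd δ hflip
end

section
/- Let 𝒯 = (T, λ) be a temporal oriented tree and let G be its connectivity graph. Then G contains no anti-hole, i.e., no induced subgraph whose complement is a cycle of length at least 5. -/
namespace NoAntiholeAux

open SimpleGraph Walk

variable {V : Type*} {lab : V → V → Finset ℕ}

/-- Sub temporal path from position `a` to position `b`. -/
def subT (P : TPath lab) (a b : ℕ) (hab : a ≤ b) (hb : b ≤ P.len) : TPath lab where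
  len := b - a
  verts i := P.verts ⟨a + i.val, by have := i.isLt; omega⟩
  times i := P.times ⟨a + i.val, by have := i.isLt; omega⟩
  inj := by
    intro i j h
    have := P.inj h
    simp only [Fin.mk.injEq] at this
    exact Fin.ext (by omega)
  mono := by
    intro i j hij
    exact P.mono (by simpa using Nat.add_lt_add_left hij a)
  mem_lab := by
    intro i
    have h := P.mem_lab ⟨a + i.val, by have := i.isLt; omega⟩
    convert h using 3 <;> first | rfl | exact Fin.ext (by simp)

def Reach (lab : V → V → Finset ℕ) (u v : V) : Prop := ∃ P : TPath lab, P.FromTo u v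

lemma subT_fromTo (P : TPath lab) (a b : ℕ) (hab : a ≤ b) (hb : b ≤ P.len) :
    (subT P a b hab hb).FromTo (P.verts ⟨a, by omega⟩) (P.verts ⟨b, by omega⟩) := by
  constructor
  · show P.verts _ = _
    exact congrArg P.verts (Fin.ext (by simp))
  · show P.verts _ = _
    refine congrArg P.verts (Fin.ext ?_)
    show a + (Fin.last (b - a)).val = b
    have : (Fin.last (b - a)).val = b - a := rfl
    omega

lemma con_to_reach {u v : V} (h : TempConnected lab u v) :
    Reach lab u v ∨ Reach lab v u := by
  obtain ⟨P, ⟨i, hi⟩, ⟨j, hj⟩⟩ := h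
  rcases le_total i.val j.val with hle | hle
  · left
    refine ⟨subT P i.val j.val hle (by have := j.isLt; omega), ?_⟩
    have := subT_fromTo P i.val j.val hle (by have := j.isLt; omega)
    rwa [Fin.eta, Fin.eta, hi, hj] at this
  · right
    refine ⟨subT P j.val i.val hle (by have := i.isLt; omega), ?_⟩
    have := subT_fromTo P j.val i.val hle (by have := i.isLt; omega)
    rwa [Fin.eta, Fin.eta, hi, hj] at this

lemma con_symm {u v : V} (h : TempConnected lab u v) : TempConnected lab v u := by
  obtain ⟨P, h1, h2⟩ := h; exact ⟨P, h2, h1⟩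

lemma reach_con {u v : V} (h : Reach lab u v) : TempConnected lab u v := by
  obtain ⟨P, h1, h2⟩ := h
  exact ⟨P, ⟨0, h1⟩, ⟨Fin.last P.len, h2⟩⟩

/-- Directed walk: every dart is an arc of the temporal digraph. -/
def DirW (lab : V → V → Finset ℕ) {u v : V} (p : (underlyingGraph lab).Walk u v) : Prop :=
  ∀ d ∈ p.darts, (lab d.toProd.1 d.toProd.2).Nonempty

lemma exists_walk : ∀ (n : ℕ) (f : Fin (n+1) → V),
    (∀ i : Fin n, (lab (f i.castSucc) (f i.succ)).Nonempty) →
    (∀ i : Fin n, (underlyingGraph lab).Adj (f i.castSucc) (f i.succ)) →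
    ∃ p : (underlyingGraph lab).Walk (f 0) (f (Fin.last n)),
      p.support = List.ofFn f ∧ DirW lab p := by
  intro n
  induction n with
  | zero =>
    intro f _ _
    refine ⟨Walk.nil.copy rfl (congrArg f (by ext; simp)), ?_, ?_⟩
    · simp [List.ofFn_succ]
    · intro d hd; simp at hd
  | succ n ih =>
    intro f hlab hadj
    obtain ⟨p', hp's, hp'd⟩ := ih (f ∘ Fin.succ)
      (fun i => by have h := hlab i.succ; rw [← Fin.succ_castSucc] at h; exact h)
      (fun i => by have h := hadj i.succ; rw [← Fin.succ_castSucc] at h; exact h)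
    have hend : (f ∘ Fin.succ) (Fin.last n) = f (Fin.last (n + 1)) := by
      show f (Fin.last n).succ = _
      rw [Fin.succ_last]
    refine ⟨((Walk.cons (hadj 0) (p'.copy rfl hend)).copy
        (congrArg f (by ext; simp)) rfl), ?_, ?_⟩
    · simp only [Walk.support_copy, Walk.support_cons, hp's]
      rw [List.ofFn_succ (f := f), List.ofFn_succ (f := fun i : Fin (n+1) => f i.succ)]
      simp only [Fin.castSucc_zero, Function.comp]
      rw [List.ofFn_succ (f := f ∘ Fin.succ)]
      rfl
    · intro d hd
      simp only [Walk.darts_copy, Walk.darts_cons, Walk.darts_copy, List.mem_cons] at hd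
      rcases hd with rfl | hd
      · exact hlab 0
      · exact hp'd d hd

end NoAntiholeAux

namespace NoAntiholeAux

open SimpleGraph Walk

variable {V : Type*} {lab : V → V → Finset ℕ}

/-- From a `Reach` witness, produce a directed path in the underlying graph. -/
lemma reach_walk {u v : V} (h : Reach lab u v) :
    ∃ p : (underlyingGraph lab).Walk u v, p.IsPath ∧ DirW lab p ∧
      ∀ w ∈ p.support, TempConnected lab w u ∧ TempConnected lab w v := by
  obtain ⟨P, h1, h2⟩ := h
  have hlab : ∀ i : Fin P.len, (lab (P.verts i.castSucc) (P.verts i.succ)).Nonempty :=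
    fun i => ⟨P.times i, P.mem_lab i⟩
  have hadj : ∀ i : Fin P.len, (underlyingGraph lab).Adj (P.verts i.castSucc) (P.verts i.succ) :=
    fun i => ⟨P.inj.ne (Fin.castSucc_lt_succ (i := i)).ne, Or.inl (hlab i)⟩
  obtain ⟨p0, hs, hd⟩ := exists_walk P.len P.verts hlab hadj
  refine ⟨p0.copy h1 h2, ?_, ?_, ?_⟩
  · rw [Walk.isPath_def, Walk.support_copy, hs]
    exact List.nodup_ofFn.mpr P.inj
  · intro d hd'
    rw [Walk.darts_copy] at hd'
    exact hd d hd'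
  · intro w hw
    rw [Walk.support_copy, hs, List.mem_ofFn] at hw
    constructor
    · exact ⟨P, hw, h1 ▸ ⟨0, rfl⟩⟩
    · exact ⟨P, hw, h2 ▸ ⟨Fin.last P.len, rfl⟩⟩

section Tree

/-- Uniqueness of paths in a tree. -/
lemma uniq (htree : IsTemporalOrientedTree lab) {u v : V} {p q : (underlyingGraph lab).Walk u v} (hp : p.IsPath) (hq : q.IsPath) :
    p = q := by
  have := htree.1.IsAcyclic.path_unique ⟨p, hp⟩ ⟨q, hq⟩
  exact congrArg Subtype.val this

lemma exists_first_dart {G : SimpleGraph V} {u v : V} (p : G.Walk u v) (h : ¬ p.Nil) :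
    ∃ d ∈ p.darts, d.toProd = (u, p.getVert 1) := by
  cases p with
  | nil => simp at h
  | cons hadj p₁ =>
      refine ⟨⟨(u, _), hadj⟩, by simp [Walk.darts_cons], ?_⟩
      simp [Walk.getVert_cons_succ, Walk.getVert_zero]

lemma getVert_one_append {G : SimpleGraph V} {u v w : V} (p : G.Walk u v) (q : G.Walk v w)
    (h : ¬ p.Nil) : (p.append q).getVert 1 = p.getVert 1 := by
  cases p with
  | nil => simp at h
  | cons hadj p₁ => simp [Walk.cons_append, Walk.getVert_cons_succ, Walk.getVert_zero]

lemma not_nil_reverse {G : SimpleGraph V} {u v : V} {p : G.Walk u v} (h : ¬ p.Nil) :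
    ¬ p.reverse.Nil := by
  rw [Walk.nil_iff_length_eq, Walk.length_reverse]
  rw [Walk.nil_iff_length_eq] at h
  exact h

/-- The antisymmetry: there cannot be directed paths both ways in an oriented tree. -/
lemma antisym (htree : IsTemporalOrientedTree lab) {u v : V} (hne : u ≠ v) {p : (underlyingGraph lab).Walk u v}
    {q : (underlyingGraph lab).Walk v u}
    (hp : p.IsPath) (hq : q.IsPath) (hpd : DirW lab p) (hqd : DirW lab q) : False := by
  have hpq : p = q.reverse := uniq htree hp hq.reverse
  obtain ⟨d, hd, hdp⟩ := exists_first_dart p (Walk.not_nil_of_ne hne)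
  have h1 : (lab u (p.getVert 1)).Nonempty := by
    have := hpd d hd
    rwa [hdp] at this
  have hd' : d ∈ q.reverse.darts := by rwa [hpq] at hd
  rw [Walk.mem_darts_reverse] at hd'
  have h2 : (lab (p.getVert 1) u).Nonempty := by
    have := hqd d.symm hd'
    have hsymm : d.symm.toProd = (p.getVert 1, u) := by
      rw [show d.symm.toProd = d.toProd.swap from rfl, hdp]; rfl
    rwa [hsymm] at this
  exact (h2.ne_empty) (htree.2 _ _ h1)

end Tree
end NoAntiholeAux

namespace NoAntiholeAux

open SimpleGraph Walk

variable {V : Type*} {lab : V → V → Finset ℕ}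

lemma dirW_append_left {u v w : V} {p : (underlyingGraph lab).Walk u v}
    {q : (underlyingGraph lab).Walk v w} (h : DirW lab (p.append q)) : DirW lab p := by
  intro d hd
  exact h d (by rw [Walk.darts_append]; exact List.mem_append_left _ hd)

lemma dirW_append_right {u v w : V} {p : (underlyingGraph lab).Walk u v}
    {q : (underlyingGraph lab).Walk v w} (h : DirW lab (p.append q)) : DirW lab q := by
  intro d hd
  exact h d (by rw [Walk.darts_append]; exact List.mem_append_right _ hd)

lemma dirW_append {u v w : V} {p : (underlyingGraph lab).Walk u v}
    {q : (underlyingGraph lab).Walk v w} (hp : DirW lab p) (hq : DirW lab q) :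
    DirW lab (p.append q) := by
  intro d hd
  rw [Walk.darts_append, List.mem_append] at hd
  rcases hd with hd | hd
  · exact hp d hd
  · exact hq d hd

lemma dirW_dropUntil [DecidableEq V] {u v : V} {p : (underlyingGraph lab).Walk u v}
    (hp : DirW lab p) {z : V} (hz : z ∈ p.support) : DirW lab (p.dropUntil z hz) :=
  fun d hd => hp d (Walk.darts_dropUntil_subset p hz hd)

lemma dirW_takeUntil [DecidableEq V] {u v : V} {p : (underlyingGraph lab).Walk u v}
    (hp : DirW lab p) {z : V} (hz : z ∈ p.support) : DirW lab (p.takeUntil z hz) :=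
  fun d hd => hp d (Walk.darts_takeUntil_subset p hz hd)

/-- Two directed paths sharing endpoint `v` compose to a path. -/
lemma append_isPath (htree : IsTemporalOrientedTree lab) {u v w : V}
    {p : (underlyingGraph lab).Walk u v} {q : (underlyingGraph lab).Walk v w}
    (hp : p.IsPath) (hq : q.IsPath) (hpd : DirW lab p) (hqd : DirW lab q) :
    (p.append q).IsPath := by
  classical
  rw [Walk.isPath_def, Walk.support_append, List.nodup_append]
  refine ⟨hp.support_nodup, (hq.support_nodup).tail, ?_⟩
  intro z hzp b hzt hzb
  subst hzb
  have hzq : z ∈ q.support := List.mem_of_mem_tail hzt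
  have hzv : z ≠ v := by
    intro hzveq
    have hnd := hq.support_nodup
    rw [q.support_eq_cons, List.nodup_cons] at hnd
    exact hnd.1 (hzveq ▸ hzt)
  exact antisym htree hzv (hp.dropUntil hzp) (hq.takeUntil hzq)
    (dirW_dropUntil hpd hzp) (dirW_takeUntil hqd hzq)

/-- Reverse of one leg appended to the other leg is a path, given the legs only share `m`. -/
lemma rev_append_isPath {m a b : V} {t : (underlyingGraph lab).Walk m a}
    {t' : (underlyingGraph lab).Walk m b} (ht : t.IsPath) (ht' : t'.IsPath)
    (hdisj : ∀ z ∈ t.support, z ∈ t'.support → z = m) :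
    (t.reverse.append t').IsPath := by
  rw [Walk.isPath_def, Walk.support_append, List.nodup_append]
  refine ⟨by rw [Walk.support_reverse]; exact List.nodup_reverse.mpr ht.support_nodup,
    (ht'.support_nodup).tail, ?_⟩
  intro z hz b hzt hzb
  subst hzb
  have hz1 : z ∈ t.support := by
    rw [Walk.support_reverse, List.mem_reverse] at hz; exact hz
  have hz2 : z ∈ t'.support := List.mem_of_mem_tail hzt
  have hzm := hdisj z hz1 hz2
  subst hzm
  have : t'.support = z :: t'.support.tail := t'.support_eq_cons
  have hnd := ht'.support_nodup
  rw [this] at hnd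
  exact (List.nodup_cons.mp hnd).1 hzt

/-- Median/divergence: two tree paths from a common vertex share a prefix and are
otherwise disjoint. -/
lemma med_out (htree : IsTemporalOrientedTree lab) {u v : V}
    (p : (underlyingGraph lab).Walk u v) :
    ∀ {w : V} (q : (underlyingGraph lab).Walk u w), p.IsPath → q.IsPath →
    ∃ (m : V) (s : (underlyingGraph lab).Walk u m) (t : (underlyingGraph lab).Walk m v)
      (t' : (underlyingGraph lab).Walk m w),
      p = s.append t ∧ q = s.append t' ∧ ∀ z ∈ t.support, z ∈ t'.support → z = m := by
  classical
  induction p with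
  | nil =>
    intro w q _ _
    exact ⟨_, Walk.nil, Walk.nil, q, rfl, rfl, fun z hz _ => by simpa using hz⟩
  | @cons u u₁ v hadj p₁ ih =>
    intro w q hp hq
    cases q with
    | nil =>
      refine ⟨u, Walk.nil, Walk.cons hadj p₁, Walk.nil, rfl, rfl, fun z _ hz' => by simpa using hz'⟩
    | @cons _ u₂ _ hadj' q₁ =>
      by_cases heq : u₁ = u₂
      · subst heq
        obtain ⟨m, s, t, t', h1, h2, h3⟩ := ih q₁ hp.of_cons hq.of_cons
        exact ⟨m, Walk.cons hadj s, t, t', by rw [Walk.cons_append, h1],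
          by rw [Walk.cons_append, h2], h3⟩
      · refine ⟨u, Walk.nil, Walk.cons hadj p₁, Walk.cons hadj' q₁, rfl, rfl, ?_⟩
        intro z hz1 hz2
        by_contra hzu
        have hz1' : z ∈ p₁.support := by
          rcases List.mem_cons.mp (Walk.support_cons hadj p₁ ▸ hz1 : z ∈ u :: p₁.support) with h | h
          · exact absurd h hzu
          · exact h
        have hz2' : z ∈ q₁.support := by
          rcases List.mem_cons.mp (Walk.support_cons hadj' q₁ ▸ hz2 : z ∈ u :: q₁.support) with h | h
          · exact absurd h hzu
          · exact h
        have hW1 : (Walk.cons hadj (p₁.takeUntil z hz1')).IsPath := by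
          rw [Walk.cons_isPath_iff]
          refine ⟨(hp.of_cons).takeUntil hz1', fun hu => ?_⟩
          exact (Walk.cons_isPath_iff hadj p₁).mp hp |>.2 (Walk.support_takeUntil_subset _ _ hu)
        have hW2 : (Walk.cons hadj' (q₁.takeUntil z hz2')).IsPath := by
          rw [Walk.cons_isPath_iff]
          refine ⟨(hq.of_cons).takeUntil hz2', fun hu => ?_⟩
          exact (Walk.cons_isPath_iff hadj' q₁).mp hq |>.2 (Walk.support_takeUntil_subset _ _ hu)
        have := uniq htree hW1 hW2
        have hgv := congrArg (fun r => Walk.getVert r 1) this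
        simp only [Walk.getVert_cons_succ, Walk.getVert_zero] at hgv
        exact heq hgv

end NoAntiholeAux

namespace NoAntiholeAux

open SimpleGraph Walk

variable {V : Type*} {lab : V → V → Finset ℕ}

lemma reach_not_reach (htree : IsTemporalOrientedTree lab) {u v : V} (hne : u ≠ v)
    (h1 : Reach lab u v) (h2 : Reach lab v u) : False := by
  obtain ⟨p, hp, hpd, _⟩ := reach_walk h1
  obtain ⟨q, hq, hqd, _⟩ := reach_walk h2
  exact antisym htree hne hp hq hpd hqd

/-- Out-evidence: if `Reach u s` with `s` connected to `v` as well, `u ≠ v` not connected,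
then the tree path from `u` to `v` starts with an arc leaving `u`. -/
lemma evidence_out (htree : IsTemporalOrientedTree lab) {u v s : V}
    (hncon : ¬ TempConnected lab u v) (hsu : s ≠ u)
    (hvs : TempConnected lab v s) (hus : Reach lab u s) :
    ∃ W : (underlyingGraph lab).Walk u v, W.IsPath ∧ (lab u (W.getVert 1)).Nonempty := by
  obtain ⟨p, hp, hpd, hpcon⟩ := reach_walk hus
  rcases con_to_reach hvs with hv | hv
  · -- Reach v s : common suffix
    obtain ⟨q, hq, hqd, hqcon⟩ := reach_walk hv
    obtain ⟨m, S, T, T', h1, h2, hdisj⟩ := med_out htree p.reverse q.reverse hp.reverse hq.reverse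
    have hmu : m ≠ u := by
      rintro rfl
      have : m ∈ q.support := by
        have : m ∈ q.reverse.support := by
          rw [h2]
          exact (Walk.mem_support_append_iff _ _).mpr (Or.inl (Walk.end_mem_support S))
        rwa [Walk.support_reverse, List.mem_reverse] at this
      exact hncon ((hqcon m this).1)
    have hT : T.IsPath := (h1 ▸ hp.reverse : (S.append T).IsPath).of_append_right
    have hT' : T'.IsPath := (h2 ▸ hq.reverse : (S.append T').IsPath).of_append_right
    have hW : (T.reverse.append T').IsPath := rev_append_isPath hT hT' hdisj
    have hTnil : ¬ T.reverse.Nil := not_nil_reverse (Walk.not_nil_of_ne hmu)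
    obtain ⟨d, hd, hdp⟩ := exists_first_dart T.reverse hTnil
    have hdp2 : d ∈ p.darts := by
      rw [Walk.mem_darts_reverse] at hd
      have : d.symm ∈ p.reverse.darts := by
        rw [h1, Walk.darts_append]
        exact List.mem_append_right _ hd
      rw [Walk.mem_darts_reverse, Dart.symm_symm] at this
      exact this
    have hlab : (lab u (T.reverse.getVert 1)).Nonempty := by
      have := hpd d hdp2
      rwa [hdp] at this
    refine ⟨T.reverse.append T', hW, ?_⟩
    rwa [getVert_one_append _ _ hTnil]
  · -- Reach s v : compose
    obtain ⟨q, hq, hqd, hqcon⟩ := reach_walk hv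
    have hW : (p.append q).IsPath := append_isPath htree hp hq hpd hqd
    have hpnil : ¬ p.Nil := Walk.not_nil_of_ne (Ne.symm hsu)
    obtain ⟨d, hd, hdp⟩ := exists_first_dart p hpnil
    have hlab : (lab u (p.getVert 1)).Nonempty := by
      have := hpd d hd
      rwa [hdp] at this
    refine ⟨p.append q, hW, ?_⟩
    rwa [getVert_one_append _ _ hpnil]

/-- In-evidence: dual statement, the tree path from `u` to `v` starts with an arc entering `u`. -/
lemma evidence_in (htree : IsTemporalOrientedTree lab) {u v s' : V}
    (hncon : ¬ TempConnected lab u v) (hs'u : s' ≠ u)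
    (hvs' : TempConnected lab v s') (hs'u' : Reach lab s' u) :
    ∃ W : (underlyingGraph lab).Walk u v, W.IsPath ∧ (lab (W.getVert 1) u).Nonempty := by
  obtain ⟨p, hp, hpd, hpcon⟩ := reach_walk hs'u'  -- p : s' .. u
  rcases con_to_reach hvs' with hv | hv
  · -- Reach v s' : q : v..s' ; W := (q.append p).reverse : u..v
    obtain ⟨q, hq, hqd, hqcon⟩ := reach_walk hv
    have hqp : (q.append p).IsPath := append_isPath htree hq hp hqd hpd
    have hprnil : ¬ p.reverse.Nil := not_nil_reverse (Walk.not_nil_of_ne hs'u)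
    obtain ⟨d, hd, hdp⟩ := exists_first_dart p.reverse hprnil
    have hd2 : d.symm ∈ p.darts := by rwa [Walk.mem_darts_reverse] at hd
    have hlab : (lab (p.reverse.getVert 1) u).Nonempty := by
      have := hpd d.symm hd2
      have hsym : d.symm.toProd = (p.reverse.getVert 1, u) := by
        rw [show d.symm.toProd = d.toProd.swap from rfl, hdp]; rfl
      rwa [hsym] at this
    refine ⟨(q.append p).reverse, hqp.reverse, ?_⟩
    have he : (q.append p).reverse = p.reverse.append q.reverse := Walk.reverse_append q p
    rw [he, getVert_one_append _ _ hprnil]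
    exact hlab
  · -- Reach s' v : med_out on p : s'..u and q : s'..v
    obtain ⟨q, hq, hqd, hqcon⟩ := reach_walk hv
    obtain ⟨m, S, T, T', h1, h2, hdisj⟩ := med_out htree p q hp hq
    have hmu : m ≠ u := by
      rintro rfl
      have : m ∈ q.support := by
        rw [h2]
        exact (Walk.mem_support_append_iff _ _).mpr (Or.inl (Walk.end_mem_support S))
      exact hncon ((hqcon m this).2)
    have hT : T.IsPath := (h1 ▸ hp : (S.append T).IsPath).of_append_right
    have hT' : T'.IsPath := (h2 ▸ hq : (S.append T').IsPath).of_append_right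
    have hW : (T'.reverse.append T).IsPath :=
      rev_append_isPath hT' hT (fun z hz hz' => hdisj z hz' hz)
    have hTnil : ¬ T.reverse.Nil := not_nil_reverse (Walk.not_nil_of_ne hmu)
    obtain ⟨d, hd, hdp⟩ := exists_first_dart T.reverse hTnil
    have hd2 : d.symm ∈ p.darts := by
      rw [Walk.mem_darts_reverse] at hd
      rw [h1, Walk.darts_append]
      exact List.mem_append_right _ hd
    have hlab : (lab (T.reverse.getVert 1) u).Nonempty := by
      have := hpd d.symm hd2
      have hsym : d.symm.toProd = (T.reverse.getVert 1, u) := by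
        rw [show d.symm.toProd = d.toProd.swap from rfl, hdp]; rfl
      rwa [hsym] at this
    refine ⟨(T'.reverse.append T).reverse, hW.reverse, ?_⟩
    have he : (T'.reverse.append T).reverse = T.reverse.append T'.reverse.reverse :=
      Walk.reverse_append _ _
    rw [he, getVert_one_append _ _ hTnil]
    exact hlab

/-- Direction consistency at `u` with respect to a non-connected pair `(u,v)`. -/
lemma dir_consistent (htree : IsTemporalOrientedTree lab) {u v s s' : V}
    (huv : u ≠ v) (hncon : ¬ TempConnected lab u v)
    (hsu : s ≠ u) (hs'u : s' ≠ u)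
    (hvs : TempConnected lab v s) (hvs' : TempConnected lab v s')
    (hus : Reach lab u s) (hs'u' : Reach lab s' u) : False := by
  obtain ⟨W1, hW1, hlab1⟩ := evidence_out htree hncon hsu hvs hus
  obtain ⟨W2, hW2, hlab2⟩ := evidence_in htree hncon hs'u hvs' hs'u'
  have : W1 = W2 := uniq htree hW1 hW2
  rw [this] at hlab1
  exact hlab2.ne_empty (htree.2 _ _ hlab1)

end NoAntiholeAux

namespace NoAntiholeAux

open SimpleGraph Walk

variable {V : Type*} {lab : V → V → Finset ℕ}

lemma caseA (htree : IsTemporalOrientedTree lab) {b0 b1 b2 b3 b4 : V}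
    (ne04 : b0 ≠ b4)
    (r0 : Reach lab b0 b1) (r1 : Reach lab b1 b2) (r2 : Reach lab b2 b3)
    (r3 : Reach lab b3 b4) (r4 : Reach lab b4 b0) : False := by
  obtain ⟨p0, h0, d0, _⟩ := reach_walk r0
  obtain ⟨p1, h1, d1, _⟩ := reach_walk r1
  obtain ⟨p2, h2, d2, _⟩ := reach_walk r2
  obtain ⟨p3, h3, d3, _⟩ := reach_walk r3
  obtain ⟨p4, h4, d4, _⟩ := reach_walk r4
  have hW1 : (p0.append p1).IsPath := append_isPath htree h0 h1 d0 d1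
  have dW1 : DirW lab (p0.append p1) := dirW_append d0 d1
  have hW2 : ((p0.append p1).append p2).IsPath := append_isPath htree hW1 h2 dW1 d2
  have dW2 : DirW lab ((p0.append p1).append p2) := dirW_append dW1 d2
  have hW3 : (((p0.append p1).append p2).append p3).IsPath := append_isPath htree hW2 h3 dW2 d3
  have dW3 : DirW lab (((p0.append p1).append p2).append p3) := dirW_append dW2 d3
  exact antisym htree ne04 hW3 h4 dW3 d4

lemma caseB (htree : IsTemporalOrientedTree lab) {b0 b1 b2 b3 b4 : V}
    (nc14 : ¬ TempConnected lab b1 b4)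
    (r0 : Reach lab b0 b1) (r1 : Reach lab b1 b2) (r2 : Reach lab b2 b3)
    (r3 : Reach lab b3 b4) (r04 : Reach lab b0 b4) : False := by
  obtain ⟨p0, h0, d0, _⟩ := reach_walk r0
  obtain ⟨p1, h1, d1, _⟩ := reach_walk r1
  obtain ⟨p2, h2, d2, _⟩ := reach_walk r2
  obtain ⟨p3, h3, d3, _⟩ := reach_walk r3
  obtain ⟨q, hq, dq, cq⟩ := reach_walk r04
  have hW1 : (p1.append p2).IsPath := append_isPath htree h1 h2 d1 d2
  have dW1 : DirW lab (p1.append p2) := dirW_append d1 d2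
  have hW2 : ((p1.append p2).append p3).IsPath := append_isPath htree hW1 h3 dW1 d3
  have dW2 : DirW lab ((p1.append p2).append p3) := dirW_append dW1 d3
  have hW : (p0.append ((p1.append p2).append p3)).IsPath := append_isPath htree h0 hW2 d0 dW2
  have hWq : p0.append ((p1.append p2).append p3) = q := uniq htree hW hq
  have hb1 : b1 ∈ (p0.append ((p1.append p2).append p3)).support :=
    (Walk.mem_support_append_iff _ _).mpr (Or.inl (Walk.end_mem_support p0))
  rw [hWq] at hb1
  exact nc14 (cq b1 hb1).2

lemma caseC (htree : IsTemporalOrientedTree lab) {b0 b1 b2 b3 b4 : V}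
    (nc14 : ¬ TempConnected lab b1 b4)
    (r0 : Reach lab b0 b1) (r1 : Reach lab b1 b2) (r2 : Reach lab b2 b3)
    (r43 : Reach lab b4 b3) (r04 : Reach lab b0 b4) : False := by
  obtain ⟨p0, h0, d0, _⟩ := reach_walk r0
  obtain ⟨p1, h1, d1, _⟩ := reach_walk r1
  obtain ⟨p2, h2, d2, _⟩ := reach_walk r2
  obtain ⟨q43, hq43, dq43, cq43⟩ := reach_walk r43
  obtain ⟨q04, hq04, dq04, cq04⟩ := reach_walk r04
  have hW1 : (p0.append p1).IsPath := append_isPath htree h0 h1 d0 d1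
  have dW1 : DirW lab (p0.append p1) := dirW_append d0 d1
  have hW2 : ((p0.append p1).append p2).IsPath := append_isPath htree hW1 h2 dW1 d2
  obtain ⟨m, S, T, T', g1, g2, gdisj⟩ :=
    med_out htree ((p0.append p1).append p2).reverse q43.reverse hW2.reverse hq43.reverse
  have hb1 : b1 ∈ ((p0.append p1).append p2).support :=
    (Walk.mem_support_append_iff _ _).mpr
      (Or.inl ((Walk.mem_support_append_iff _ _).mpr (Or.inr (Walk.start_mem_support p1))))
  have hb1r : b1 ∈ ((p0.append p1).append p2).reverse.support := by
    rw [Walk.support_reverse, List.mem_reverse]; exact hb1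
  rw [g1] at hb1r
  rcases (Walk.mem_support_append_iff _ _).mp hb1r with hS | hT
  · have : b1 ∈ q43.reverse.support := by
      rw [g2]
      exact (Walk.mem_support_append_iff _ _).mpr (Or.inl hS)
    rw [Walk.support_reverse, List.mem_reverse] at this
    exact nc14 (cq43 b1 this).1
  · have hTp : T.IsPath := (g1 ▸ hW2.reverse : (S.append T).IsPath).of_append_right
    have hT'p : T'.IsPath := (g2 ▸ hq43.reverse : (S.append T').IsPath).of_append_right
    have hW04 : (T.reverse.append T').IsPath := rev_append_isPath hTp hT'p gdisj
    have hWq : T.reverse.append T' = q04 := uniq htree hW04 hq04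
    have hb1W : b1 ∈ (T.reverse.append T').support :=
      (Walk.mem_support_append_iff _ _).mpr
        (Or.inl (by rw [Walk.support_reverse, List.mem_reverse]; exact hT))
    rw [hWq] at hb1W
    exact nc14 (cq04 b1 hb1W).2

lemma caseD (htree : IsTemporalOrientedTree lab) {b0 b1 b2 b3 b4 : V}
    (nc03 : ¬ TempConnected lab b0 b3) (nc02 : ¬ TempConnected lab b0 b2)
    (r01 : Reach lab b0 b1) (r21 : Reach lab b2 b1) (r23 : Reach lab b2 b3)
    (r43 : Reach lab b4 b3) (r40 : Reach lab b4 b0) : False := by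
  obtain ⟨p01, h01, d01, _⟩ := reach_walk r01
  obtain ⟨p21, h21, d21, c21⟩ := reach_walk r21
  obtain ⟨p23, h23, d23, c23⟩ := reach_walk r23
  obtain ⟨p43, h43, d43, c43⟩ := reach_walk r43
  obtain ⟨p40, h40, d40, c40⟩ := reach_walk r40
  obtain ⟨m, S, T, T', g1, g2, gdisj⟩ := med_out htree p40 p43 h40 h43
  have hT : T.IsPath := (g1 ▸ h40 : (S.append T).IsPath).of_append_right
  have hT' : T'.IsPath := (g2 ▸ h43 : (S.append T').IsPath).of_append_right
  have dT : DirW lab T := dirW_append_right (g1 ▸ d40)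
  have dT' : DirW lab T' := dirW_append_right (g2 ▸ d43)
  have hw1 : (T.append p01).IsPath := append_isPath htree hT h01 dT d01
  have dw1 : DirW lab (T.append p01) := dirW_append dT d01
  obtain ⟨c, σ, τ₁, τ₃, k1, k2, kdisj⟩ := med_out htree (T.append p01) T' hw1 hT'
  have hb0 : b0 ∈ (T.append p01).support :=
    (Walk.mem_support_append_iff _ _).mpr (Or.inl (Walk.end_mem_support T))
  rw [k1] at hb0
  rcases (Walk.mem_support_append_iff _ _).mp hb0 with hσ | hτ
  · have hb0T' : b0 ∈ T'.support := by
      rw [k2]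
      exact (Walk.mem_support_append_iff _ _).mpr (Or.inl hσ)
    have hb0p43 : b0 ∈ p43.support := by
      rw [g2]
      exact (Walk.mem_support_append_iff _ _).mpr (Or.inr hb0T')
    exact nc03 (c43 b0 hb0p43).2
  · have hτ₁ : τ₁.IsPath := (k1 ▸ hw1 : (σ.append τ₁).IsPath).of_append_right
    have hτ₃ : τ₃.IsPath := (k2 ▸ hT' : (σ.append τ₃).IsPath).of_append_right
    have hW13 : (τ₁.reverse.append τ₃).IsPath := rev_append_isPath hτ₁ hτ₃ kdisj
    obtain ⟨c₂, σ₂, u₁, u₃, l1, l2, ldisj⟩ := med_out htree p21 p23 h21 h23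
    have hu₁ : u₁.IsPath := (l1 ▸ h21 : (σ₂.append u₁).IsPath).of_append_right
    have hu₃ : u₃.IsPath := (l2 ▸ h23 : (σ₂.append u₃).IsPath).of_append_right
    have hW13' : (u₁.reverse.append u₃).IsPath := rev_append_isPath hu₁ hu₃ ldisj
    have heq : τ₁.reverse.append τ₃ = u₁.reverse.append u₃ := uniq htree hW13 hW13'
    have hb0W : b0 ∈ (τ₁.reverse.append τ₃).support :=
      (Walk.mem_support_append_iff _ _).mpr
        (Or.inl (by rw [Walk.support_reverse, List.mem_reverse]; exact hτ))
    rw [heq] at hb0W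
    rcases (Walk.mem_support_append_iff _ _).mp hb0W with hu | hu
    · rw [Walk.support_reverse, List.mem_reverse] at hu
      have : b0 ∈ p21.support := by
        rw [l1]
        exact (Walk.mem_support_append_iff _ _).mpr (Or.inr hu)
      exact nc02 (c21 b0 this).1
    · have : b0 ∈ p23.support := by
        rw [l2]
        exact (Walk.mem_support_append_iff _ _).mpr (Or.inr hu)
      exact nc02 (c23 b0 this).1

end NoAntiholeAux

namespace NoAntiholeAux
open SimpleGraph Walk

theorem no_antihole_aux {V : Type*} [Fintype V] (lab : V → V → Finset ℕ)
    (htree : IsTemporalOrientedTree lab) :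
    ¬ HasAntihole (connGraph lab) := by
  classical
  rintro ⟨n, hn5, c, hinj, hcyc⟩
  have hNCon : ∀ i j : Fin n, ((i.val + 1) % n = j.val ∨ (j.val + 1) % n = i.val) →
      ¬ TempConnected lab (c i) (c j) := by
    intro i j hcons hc
    have hadj : (connGraph lab)ᶜ.Adj (c i) (c j) := (hcyc i j).mpr hcons
    rw [SimpleGraph.compl_adj] at hadj
    exact hadj.2 ⟨hadj.1, hc⟩
  have hCon : ∀ i j : Fin n, ¬((i.val + 1) % n = j.val ∨ (j.val + 1) % n = i.val) →
      i ≠ j → TempConnected lab (c i) (c j) := by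
    intro i j hnc hne
    have h1 : ¬ (connGraph lab)ᶜ.Adj (c i) (c j) := fun h => hnc ((hcyc i j).mp h)
    rw [SimpleGraph.compl_adj, not_and] at h1
    exact (not_not.mp (h1 (hinj.ne hne))).2
  rcases eq_or_lt_of_le hn5 with h5 | h6
  · -- n = 5
    subst h5
    have hc0 : TempConnected lab (c 0) (c 2) := hCon 0 2 (by decide) (by decide)
    have hc1 : TempConnected lab (c 2) (c 4) := hCon 2 4 (by decide) (by decide)
    have hc2 : TempConnected lab (c 4) (c 1) := hCon 4 1 (by decide) (by decide)
    have hc3 : TempConnected lab (c 1) (c 3) := hCon 1 3 (by decide) (by decide)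
    have hc4 : TempConnected lab (c 3) (c 0) := hCon 3 0 (by decide) (by decide)
    have n02 : ¬ TempConnected lab (c 0) (c 4) := hNCon 0 4 (by decide)
    have n20 : ¬ TempConnected lab (c 4) (c 0) := hNCon 4 0 (by decide)
    have n13 : ¬ TempConnected lab (c 2) (c 1) := hNCon 2 1 (by decide)
    have n31 : ¬ TempConnected lab (c 1) (c 2) := hNCon 1 2 (by decide)
    have n24 : ¬ TempConnected lab (c 4) (c 3) := hNCon 4 3 (by decide)
    have n42 : ¬ TempConnected lab (c 3) (c 4) := hNCon 3 4 (by decide)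
    have n30 : ¬ TempConnected lab (c 1) (c 0) := hNCon 1 0 (by decide)
    have n03 : ¬ TempConnected lab (c 0) (c 1) := hNCon 0 1 (by decide)
    have n41 : ¬ TempConnected lab (c 3) (c 2) := hNCon 3 2 (by decide)
    have n14 : ¬ TempConnected lab (c 2) (c 3) := hNCon 2 3 (by decide)
    have ne04 : c 0 ≠ c 3 := hinj.ne (by decide)
    have ne40 : c 3 ≠ c 0 := hinj.ne (by decide)
    rcases con_to_reach hc0 with h0 | h0 <;>
      rcases con_to_reach hc1 with h1 | h1 <;>
      rcases con_to_reach hc2 with h2 | h2 <;>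
      rcases con_to_reach hc3 with h3 | h3 <;>
      rcases con_to_reach hc4 with h4 | h4
    · exact caseA htree ne04 h0 h1 h2 h3 h4
    · exact caseB htree n14 h0 h1 h2 h3 h4
    · exact caseB htree n03 h4 h0 h1 h2 h3
    · exact caseC htree n14 h0 h1 h2 h3 h4
    · exact caseB htree n42 h3 h4 h0 h1 h2
    · exact caseD htree n14 n13 h1 h2 h3 h4 h0
    · exact caseC htree n03 h4 h0 h1 h2 h3
    · exact caseC htree n41 h4 h3 h2 h1 h0
    · exact caseB htree n31 h2 h3 h4 h0 h1
    · exact caseD htree n31 n30 h3 h4 h0 h1 h2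
    · exact caseD htree n03 n02 h0 h1 h2 h3 h4
    · exact caseD htree n41 n42 h3 h2 h1 h0 h4
    · exact caseC htree n42 h3 h4 h0 h1 h2
    · exact caseD htree n24 n20 h1 h0 h4 h3 h2
    · exact caseC htree n30 h3 h2 h1 h0 h4
    · exact caseB htree n41 h4 h3 h2 h1 h0
    · exact caseB htree n20 h1 h2 h3 h4 h0
    · exact caseC htree n20 h1 h2 h3 h4 h0
    · exact caseD htree n20 n24 h2 h3 h4 h0 h1
    · exact caseC htree n02 h0 h4 h3 h2 h1
    · exact caseD htree n42 n41 h4 h0 h1 h2 h3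
    · exact caseD htree n02 n03 h4 h3 h2 h1 h0
    · exact caseD htree n30 n31 h2 h1 h0 h4 h3
    · exact caseB htree n02 h0 h4 h3 h2 h1
    · exact caseC htree n31 h2 h3 h4 h0 h1
    · exact caseC htree n13 h1 h0 h4 h3 h2
    · exact caseD htree n13 n14 h0 h4 h3 h2 h1
    · exact caseB htree n13 h1 h0 h4 h3 h2
    · exact caseC htree n24 h2 h1 h0 h4 h3
    · exact caseB htree n24 h2 h1 h0 h4 h3
    · exact caseB htree n30 h3 h2 h1 h0 h4
    · exact caseA htree ne40 h3 h2 h1 h0 h4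
  · -- n >= 6
    have hn6 : 6 ≤ n := h6
    have hnpos : 0 < n := by omega
    set A : ℕ → V := fun k => c ⟨k % n, Nat.mod_lt _ hnpos⟩ with hA
    have hAeq : ∀ k l : ℕ, k % n = l % n → A k = A l := by
      intro k l h
      simp only [hA]
      exact congrArg c (Fin.ext h)
    have hAne : ∀ k l : ℕ, k % n ≠ l % n → A k ≠ A l := by
      intro k l h hh
      simp only [hA] at hh
      exact h (congrArg Fin.val (hinj hh))
    have harith : ∀ (x y j : ℕ), x < n → y < n → x ≠ y → (j + x) % n ≠ (j + y) % n := by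
      intro x y j hx hy hxy h
      have h2 : x % n = y % n := Nat.ModEq.add_left_cancel' j h
      rw [Nat.mod_eq_of_lt hx, Nat.mod_eq_of_lt hy] at h2
      exact hxy h2
    have hNConA : ∀ k l : ℕ, (k + 1) % n = l % n → ¬ TempConnected lab (A k) (A l) := by
      intro k l h
      simp only [hA]
      apply hNCon
      left
      show (k % n + 1) % n = l % n
      rw [Nat.mod_add_mod]
      exact h
    have hConA : ∀ k l : ℕ, k % n ≠ l % n → (k + 1) % n ≠ l % n → (l + 1) % n ≠ k % n →
        TempConnected lab (A k) (A l) := by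
      intro k l h1 h2 h3
      simp only [hA]
      apply hCon
      · rintro (hh | hh)
        · exact h2 (by rw [← Nat.mod_add_mod]; exact hh)
        · exact h3 (by rw [← Nat.mod_add_mod]; exact hh)
      · intro hh
        exact h1 (congrArg Fin.val hh)
    have AR0 : ∀ (y j : ℕ), y < n → 0 ≠ y → A j ≠ A (j + y) := by
      intro y j hy h0y
      have := harith 0 y j (by omega) hy h0y
      apply hAne
      simpa using this
    have CON : ∀ (x y j : ℕ), x < n → y < n → x ≠ y → (x + 1) % n ≠ y → (y + 1) % n ≠ x →
        TempConnected lab (A (j + x)) (A (j + y)) := by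
      intro x y j hx hy hxy h1 h2
      apply hConA
      · exact harith x y j hx hy hxy
      · rw [show j + x + 1 = j + (x + 1) by omega]
        rcases Nat.lt_or_ge (x + 1) n with hlt | hge
        · rw [Nat.mod_eq_of_lt hlt] at h1
          exact harith (x + 1) y j hlt hy h1
        · have hxe : x + 1 = n := by omega
          rw [hxe, Nat.add_mod_right]
          rw [hxe, Nat.mod_self] at h1
          have := harith 0 y j (by omega) hy h1
          simpa using this
      · rw [show j + y + 1 = j + (y + 1) by omega]
        rcases Nat.lt_or_ge (y + 1) n with hlt | hge
        · rw [Nat.mod_eq_of_lt hlt] at h2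
          exact harith (y + 1) x j hlt hx h2
        · have hye : y + 1 = n := by omega
          rw [hye, Nat.add_mod_right]
          rw [hye, Nat.mod_self] at h2
          have := harith 0 x j (by omega) hx h2
          simpa using this
    have CON0 : ∀ (y j : ℕ), y < n → 0 ≠ y → (0 + 1) % n ≠ y → (y + 1) % n ≠ 0 →
        TempConnected lab (A j) (A (j + y)) := by
      intro y j hy h1 h2 h3
      have := CON 0 y j (by omega) hy h1 h2 h3
      simpa using this
    have excl : ∀ k l : ℕ, A k ≠ A l → TempConnected lab (A k) (A l) →
        (Reach lab (A k) (A l) ↔ ¬ Reach lab (A l) (A k)) := by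
      intro k l hne hcon
      constructor
      · intro hr1 hr2
        exact reach_not_reach htree hne hr1 hr2
      · intro hr1
        rcases con_to_reach hcon with h | h
        · exact h
        · exact absurd h hr1
    have dcw : ∀ u v s s' : V, u ≠ v → ¬ TempConnected lab u v → s ≠ u → s' ≠ u →
        TempConnected lab u s → TempConnected lab u s' →
        TempConnected lab v s → TempConnected lab v s' →
        (Reach lab u s ↔ Reach lab u s') := by
      intro u v s s' huv hnc hsu hs'u hus hus' hvs hvs'
      constructor
      · intro h
        by_contra h'
        have hr : Reach lab s' u := by
          rcases con_to_reach hus' with h'' | h''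
          · exact absurd h'' h'
          · exact h''
        exact dir_consistent htree huv hnc hsu hs'u hvs hvs' h hr
      · intro h
        by_contra h'
        have hr : Reach lab s u := by
          rcases con_to_reach hus with h'' | h''
          · exact absurd h'' h'
          · exact h''
        exact dir_consistent htree huv hnc hs'u hsu hvs' hvs h hr
    -- the three consistency families
    have S1 : ∀ j : ℕ, Reach lab (A j) (A (j + 2)) ↔ Reach lab (A j) (A (j + 3)) := by
      intro j
      apply dcw (A j) (A (j + (n - 1))) (A (j + 2)) (A (j + 3))
      · exact AR0 (n - 1) j (by omega) (by omega)
      · intro hcc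
        refine hNConA (j + (n - 1)) j ?_ (con_symm hcc)
        rw [show j + (n - 1) + 1 = j + n by omega, Nat.add_mod_right]
      · exact (AR0 2 j (by omega) (by omega)).symm
      · exact (AR0 3 j (by omega) (by omega)).symm
      · exact CON0 2 j (by omega) (by omega)
          (by rw [Nat.mod_eq_of_lt (by omega : 1 < n)]; omega)
          (by rw [Nat.mod_eq_of_lt (by omega : 3 < n)]; omega)
      · exact CON0 3 j (by omega) (by omega)
          (by rw [Nat.mod_eq_of_lt (by omega : 1 < n)]; omega)
          (by rw [Nat.mod_eq_of_lt (by omega : 4 < n)]; omega)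
      · exact CON (n - 1) 2 j (by omega) (by omega) (by omega)
          (by rw [show n - 1 + 1 = n by omega, Nat.mod_self]; omega)
          (by rw [Nat.mod_eq_of_lt (by omega : 3 < n)]; omega)
      · exact CON (n - 1) 3 j (by omega) (by omega) (by omega)
          (by rw [show n - 1 + 1 = n by omega, Nat.mod_self]; omega)
          (by rw [Nat.mod_eq_of_lt (by omega : 4 < n)]; omega)
    have S2 : ∀ j : ℕ, Reach lab (A j) (A (j + 3)) ↔ Reach lab (A j) (A (j + (n - 2))) := by
      intro j
      apply dcw (A j) (A (j + 1)) (A (j + 3)) (A (j + (n - 2)))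
      · exact AR0 1 j (by omega) (by omega)
      · exact hNConA j (j + 1) rfl
      · exact (AR0 3 j (by omega) (by omega)).symm
      · exact (AR0 (n - 2) j (by omega) (by omega)).symm
      · exact CON0 3 j (by omega) (by omega)
          (by rw [Nat.mod_eq_of_lt (by omega : 1 < n)]; omega)
          (by rw [Nat.mod_eq_of_lt (by omega : 4 < n)]; omega)
      · exact CON0 (n - 2) j (by omega) (by omega)
          (by rw [Nat.mod_eq_of_lt (by omega : 1 < n)]; omega)
          (by rw [show n - 2 + 1 = n - 1 by omega, Nat.mod_eq_of_lt (by omega : n - 1 < n)]; omega)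
      · exact CON 1 3 j (by omega) (by omega) (by omega)
          (by rw [Nat.mod_eq_of_lt (by omega : 2 < n)]; omega)
          (by rw [Nat.mod_eq_of_lt (by omega : 4 < n)]; omega)
      · exact CON 1 (n - 2) j (by omega) (by omega) (by omega)
          (by rw [Nat.mod_eq_of_lt (by omega : 2 < n)]; omega)
          (by rw [show n - 2 + 1 = n - 1 by omega, Nat.mod_eq_of_lt (by omega : n - 1 < n)]; omega)
    have T1 : ∀ j : ℕ, Reach lab (A j) (A (j + 2)) ↔ Reach lab (A j) (A (j + (n - 3))) := by
      intro j
      apply dcw (A j) (A (j + (n - 1))) (A (j + 2)) (A (j + (n - 3)))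
      · exact AR0 (n - 1) j (by omega) (by omega)
      · intro hcc
        refine hNConA (j + (n - 1)) j ?_ (con_symm hcc)
        rw [show j + (n - 1) + 1 = j + n by omega, Nat.add_mod_right]
      · exact (AR0 2 j (by omega) (by omega)).symm
      · exact (AR0 (n - 3) j (by omega) (by omega)).symm
      · exact CON0 2 j (by omega) (by omega)
          (by rw [Nat.mod_eq_of_lt (by omega : 1 < n)]; omega)
          (by rw [Nat.mod_eq_of_lt (by omega : 3 < n)]; omega)
      · exact CON0 (n - 3) j (by omega) (by omega)
          (by rw [Nat.mod_eq_of_lt (by omega : 1 < n)]; omega)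
          (by rw [show n - 3 + 1 = n - 2 by omega, Nat.mod_eq_of_lt (by omega : n - 2 < n)]; omega)
      · exact CON (n - 1) 2 j (by omega) (by omega) (by omega)
          (by rw [show n - 1 + 1 = n by omega, Nat.mod_self]; omega)
          (by rw [Nat.mod_eq_of_lt (by omega : 3 < n)]; omega)
      · exact CON (n - 1) (n - 3) j (by omega) (by omega) (by omega)
          (by rw [show n - 1 + 1 = n by omega, Nat.mod_self]; omega)
          (by rw [show n - 3 + 1 = n - 2 by omega, Nat.mod_eq_of_lt (by omega : n - 2 < n)]; omega)
    have EX1 : ∀ j : ℕ, Reach lab (A j) (A (j + (n - 2))) ↔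
        ¬ Reach lab (A (j + (n - 2))) (A j) := by
      intro j
      apply excl
      · exact AR0 (n - 2) j (by omega) (by omega)
      · exact CON0 (n - 2) j (by omega) (by omega)
          (by rw [Nat.mod_eq_of_lt (by omega : 1 < n)]; omega)
          (by rw [show n - 2 + 1 = n - 1 by omega, Nat.mod_eq_of_lt (by omega : n - 1 < n)]; omega)
    have EX2 : ∀ j : ℕ, Reach lab (A j) (A (j + (n - 3))) ↔
        ¬ Reach lab (A (j + (n - 3))) (A j) := by
      intro j
      apply excl
      · exact AR0 (n - 3) j (by omega) (by omega)
      · exact CON0 (n - 3) j (by omega) (by omega)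
          (by rw [Nat.mod_eq_of_lt (by omega : 1 < n)]; omega)
          (by rw [show n - 3 + 1 = n - 2 by omega, Nat.mod_eq_of_lt (by omega : n - 2 < n)]; omega)
    have X : ∀ j : ℕ, Reach lab (A j) (A (j + 2)) ↔
        ¬ Reach lab (A (j + (n - 2))) (A (j + (n - 2) + 2)) := by
      intro j
      have t2 : A (j + (n - 2) + 2) = A j := by
        apply hAeq
        rw [show j + (n - 2) + 2 = j + n by omega, Nat.add_mod_right]
      rw [t2]
      exact (S1 j).trans ((S2 j).trans (EX1 j))
    have Y : ∀ j : ℕ, Reach lab (A j) (A (j + 2)) ↔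
        ¬ Reach lab (A (j + (n - 3))) (A (j + (n - 3) + 2)) := by
      intro j
      have t1 : Reach lab (A j) (A (j + 2)) ↔ ¬ Reach lab (A (j + (n - 3))) (A j) :=
        (T1 j).trans (EX2 j)
      have t2 : A (j + (n - 3) + 3) = A j := by
        apply hAeq
        rw [show j + (n - 3) + 3 = j + n by omega, Nat.add_mod_right]
      have t3 : Reach lab (A (j + (n - 3))) (A j) ↔
          Reach lab (A (j + (n - 3))) (A (j + (n - 3) + 2)) := by
        rw [← t2]
        exact (S1 (j + (n - 3))).symm
      exact t1.trans (not_congr t3)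
    have hstep : ∀ m : ℕ, (Reach lab (A (m + 1)) (A (m + 1 + 2)) ↔
        Reach lab (A m) (A (m + 2))) := by
      intro m
      have x := X (m + 3)
      rw [show m + 3 + (n - 2) = m + n + 1 by omega] at x
      have y := Y (m + 3)
      rw [show m + 3 + (n - 3) = m + n by omega] at y
      have hxy : Reach lab (A (m + n + 1)) (A (m + n + 1 + 2)) ↔
          Reach lab (A (m + n)) (A (m + n + 2)) := not_iff_not.mp (x.symm.trans y)
      have hp1 : A (m + n + 1) = A (m + 1) := by
        apply hAeq
        rw [show m + n + 1 = m + 1 + n by omega, Nat.add_mod_right]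
      have hp2 : A (m + n + 1 + 2) = A (m + 1 + 2) := by
        apply hAeq
        rw [show m + n + 1 + 2 = m + 1 + 2 + n by omega, Nat.add_mod_right]
      have hp3 : A (m + n) = A m := by
        apply hAeq
        exact Nat.add_mod_right m n
      have hp4 : A (m + n + 2) = A (m + 2) := by
        apply hAeq
        rw [show m + n + 2 = m + 2 + n by omega, Nat.add_mod_right]
      rw [hp1, hp2, hp3, hp4] at hxy
      exact hxy
    have hchain : ∀ k : ℕ, Reach lab (A 0) (A 2) ↔ Reach lab (A k) (A (k + 2)) := by
      intro k
      induction k with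
      | zero => exact Iff.rfl
      | succ k ih => exact ih.trans (hstep k).symm
    have hx0 := X 0
    simp only [Nat.zero_add] at hx0
    have hcc := hchain (n - 2)
    exact iff_not_self (hcc.symm.trans hx0)

end NoAntiholeAux

/-- The connectivity graph of a temporal oriented tree contains no anti-hole. -/
theorem connGraph_no_antihole {V : Type*} [Fintype V] (lab : V → V → Finset ℕ)
    (hpos : PositiveLabels lab) (htree : IsTemporalOrientedTree lab) :
    ¬ HasAntihole (connGraph lab) := by
  exact NoAntiholeAux.no_antihole_aux lab htree
end

section
/- For every integer n ≥ 2, let 𝒯_n = (T_n, λ) be the temporal digraph where T_n is the transitive tournament on vertices u_1, …, u_n (with an arc u_i→u_j whenever i < j) and λ(u_i→u_j) = {n − j + 1} for all i < j. Then 𝒯_n is a temporal DAG, the maximum size of a temporal antichain of 𝒯_n is 1, and the minimum cardinality of a temporal path cover of 𝒯_n, as well as the minimum cardinality of a temporally disjoint path cover of 𝒯_n, is ⌈n/2⌉. In particular, temporal DAGs do not satisfy the Dilworth property nor the TD-Dilworth property, and the ratio between the minimum cover size and the maximum temporal antichain size can be arbitrarily large. -/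
section Aux

variable {V : Type*} (lab : V → V → Finset ℕ)

/-- The single-vertex temporal path. -/
def singlePath (v : V) : TPath lab where
  len := 0
  verts := fun _ => v
  times := Fin.elim0
  inj := fun a b _ => Fin.ext (by omega)
  mono := fun a => a.elim0
  mem_lab := fun i => i.elim0

/-- The temporal path consisting of a single arc. -/
def edgePath (u v : V) (t : ℕ) (huv : u ≠ v) (h : t ∈ lab u v) : TPath lab where
  len := 1
  verts := ![u, v]
  times := fun _ => t
  inj := by
    intro a b hab
    fin_cases a <;> fin_cases b <;> simp_all
  mono := by
    intro a b hab
    rw [Fin.lt_def] at hab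
    omega
  mem_lab := by
    intro i
    fin_cases i
    simpa using h

lemma edgePath_len (u v : V) (t : ℕ) (huv : u ≠ v) (h : t ∈ lab u v) :
    (edgePath lab u v t huv h).len = 1 := rfl

lemma singlePath_len (v : V) : (singlePath lab v).len = 0 := rfl

lemma mem_edgePath_left (u v : V) (t : ℕ) (huv : u ≠ v) (h : t ∈ lab u v) :
    u ∈ (edgePath lab u v t huv h).vertexSet := ⟨0, rfl⟩

lemma mem_edgePath_right (u v : V) (t : ℕ) (huv : u ≠ v) (h : t ∈ lab u v) :
    v ∈ (edgePath lab u v t huv h).vertexSet := ⟨1, rfl⟩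

lemma mem_singlePath (v : V) : v ∈ (singlePath lab v).vertexSet := ⟨0, rfl⟩

end Aux

section TT

variable {n : ℕ}

lemma tt_len_le_one (lab : Fin n → Fin n → Finset ℕ)
    (hlab : lab = fun i j => if i < j then {n - j.val} else ∅)
    (P : TPath lab) : P.len ≤ 1 := by
  by_contra h
  push_neg at h
  have h0 : (0 : ℕ) < P.len := by omega
  have h1 : (1 : ℕ) < P.len := h
  have hv0 : 0 < P.len + 1 := by omega
  have hv1 : 1 < P.len + 1 := by omega
  have hv2 : 2 < P.len + 1 := by omega
  have m0 : P.times ⟨0, h0⟩ ∈ lab (P.verts ⟨0, hv0⟩) (P.verts ⟨1, hv1⟩) :=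
    P.mem_lab ⟨0, h0⟩
  have m1 : P.times ⟨1, h1⟩ ∈ lab (P.verts ⟨1, hv1⟩) (P.verts ⟨2, hv2⟩) :=
    P.mem_lab ⟨1, h1⟩
  have ht := P.mono (show (⟨0, h0⟩ : Fin P.len) < ⟨1, h1⟩ by
    rw [Fin.lt_def]; exact Nat.zero_lt_one)
  subst hlab
  simp only at m0 m1
  split_ifs at m0 with c0
  · split_ifs at m1 with c1
    · simp only [Finset.mem_singleton] at m0 m1
      rw [Fin.lt_def] at c0 c1
      have hb := (P.verts ⟨2, hv2⟩).isLt
      rw [m0, m1] at ht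
      omega
    · exact absurd m1 (Finset.notMem_empty _)
  · exact absurd m0 (Finset.notMem_empty _)

lemma tt_connected (lab : Fin n → Fin n → Finset ℕ)
    (hlab : lab = fun i j => if i < j then {n - j.val} else ∅)
    (a b : Fin n) (hab : a ≠ b) : TempConnected lab a b := by
  rcases lt_or_gt_of_ne hab with hlt | hlt
  · have hm : (n - b.val) ∈ lab a b := by
      rw [hlab]; simp [hlt]
    exact ⟨edgePath lab a b _ hab hm, mem_edgePath_left .., mem_edgePath_right ..⟩
  · have hm : (n - a.val) ∈ lab b a := by
      rw [hlab]; simp [hlt]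
    exact ⟨edgePath lab b a _ hab.symm hm, mem_edgePath_right .., mem_edgePath_left ..⟩

/-- The cover path: pairs up vertices `2i, 2i+1` (or a single vertex at the end). -/
def coverPath (lab : Fin n → Fin n → Finset ℕ)
    (hlab : lab = fun i j => if i < j then {n - j.val} else ∅)
    (i : Fin ((n + 1) / 2)) : TPath lab :=
  if h : 2 * i.val + 1 < n then
    edgePath lab ⟨2 * i.val, by omega⟩ ⟨2 * i.val + 1, h⟩ (n - (2 * i.val + 1))
      (fun he => by simp [Fin.ext_iff] at he)
      (by rw [hlab]; simp [Fin.lt_def])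
  else
    singlePath lab ⟨2 * i.val, by have := i.isLt; omega⟩

lemma coverPath_verts (lab : Fin n → Fin n → Finset ℕ)
    (hlab : lab = fun i j => if i < j then {n - j.val} else ∅)
    (i : Fin ((n + 1) / 2)) (v : Fin n) (hv : v ∈ (coverPath lab hlab i).vertexSet) :
    v.val = 2 * i.val ∨ v.val = 2 * i.val + 1 := by
  unfold coverPath at hv
  split_ifs at hv with h
  · rcases hv with ⟨k, rfl⟩
    fin_cases k <;> simp [edgePath]
  · rcases hv with ⟨k, rfl⟩
    left; rfl

end TT

/-- The labeled transitive tournament 𝒯ₙ: its underlying digraph is acyclic (it is a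
temporal DAG), its maximum temporal antichain has size 1, and its minimum temporal path
cover and minimum temporally disjoint path cover both have size ⌈n/2⌉. In particular
temporal DAGs satisfy neither the Dilworth nor the TD-Dilworth property, and the ratio
between minimum cover size and maximum antichain size is unbounded. -/
theorem transitive_tournament_example (n : ℕ) (hn : 2 ≤ n)
    (lab : Fin n → Fin n → Finset ℕ)
    (hlab : lab = fun i j => if i < j then {n - j.val} else ∅) :
    (∀ v : Fin n, ¬ Relation.TransGen (fun a b => (lab a b).Nonempty) v v) ∧
    IsGreatest (antichainSizes lab) 1 ∧
    IsLeast (tpcSizes lab) ((n + 1) / 2) ∧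
    IsLeast (tdpcSizes lab) ((n + 1) / 2) := by
  -- arcs go strictly upward
  have harc : ∀ a b : Fin n, (lab a b).Nonempty → a < b := by
    intro a b hab
    rw [hlab] at hab
    simp only at hab
    by_contra hc
    rw [if_neg hc] at hab
    exact Finset.not_nonempty_empty hab
  -- lower bound for covers
  have hlow : ∀ m : ℕ, ∀ C : Fin m → TPath lab, IsTPC lab C → (n + 1) / 2 ≤ m := by
    intro m C hC
    have hsub : (Finset.univ : Finset (Fin n)) ⊆
        Finset.univ.biUnion (fun i => Finset.image (C i).verts Finset.univ) := by
      intro v _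
      obtain ⟨i, k, hk⟩ := hC v
      exact Finset.mem_biUnion.mpr ⟨i, Finset.mem_univ _,
        Finset.mem_image.mpr ⟨k, Finset.mem_univ _, hk⟩⟩
    have hcard := Finset.card_le_card hsub
    have hle : (Finset.univ.biUnion
        (fun i => Finset.image (C i).verts Finset.univ)).card ≤ 2 * m := by
      calc (Finset.univ.biUnion (fun i => Finset.image (C i).verts Finset.univ)).card
          ≤ ∑ i : Fin m, (Finset.image (C i).verts Finset.univ).card :=
            Finset.card_biUnion_le
        _ ≤ ∑ _i : Fin m, 2 := by
            refine Finset.sum_le_sum fun i _ => ?_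
            have h1 : (Finset.image (C i).verts Finset.univ).card ≤
                (Finset.univ : Finset (Fin ((C i).len + 1))).card :=
              Finset.card_image_le
            have h2 := tt_len_le_one lab hlab (C i)
            simp only [Finset.card_univ, Fintype.card_fin] at h1
            omega
        _ = 2 * m := by simp [Finset.sum_const, mul_comm]
    simp only [Finset.card_univ, Fintype.card_fin] at hcard
    omega
  -- the explicit cover
  have hcover : ∃ C : Fin ((n + 1) / 2) → TPath lab,
      IsTPC lab C ∧ ∀ i j, i ≠ j → TDisjoint (C i) (C j) := by
    refine ⟨coverPath lab hlab, ?_, ?_⟩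
    · intro v
      have hv := v.isLt
      refine ⟨⟨v.val / 2, by omega⟩, ?_⟩
      unfold coverPath
      split_ifs with h
      · rcases Nat.even_or_odd v.val with he | ho
        · obtain ⟨c, hc⟩ := he
          refine ⟨0, Fin.ext ?_⟩
          show 2 * (v.val / 2) = v.val
          omega
        · obtain ⟨c, hc⟩ := ho
          refine ⟨1, Fin.ext ?_⟩
          show 2 * (v.val / 2) + 1 = v.val
          omega
      · have h' : ¬ (2 * (v.val / 2) + 1 < n) := h
        refine ⟨0, Fin.ext ?_⟩
        show 2 * (v.val / 2) = v.val
        omega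
    · intro i j hij a b heq
      exfalso
      have hia := coverPath_verts lab hlab i _ ⟨a.castSucc, rfl⟩
      have hib := coverPath_verts lab hlab i _ ⟨a.succ, rfl⟩
      have hja := coverPath_verts lab hlab j _ ⟨b.castSucc, rfl⟩
      have hjb := coverPath_verts lab hlab j _ ⟨b.succ, rfl⟩
      have hne : i.val ≠ j.val := fun h => hij (Fin.ext h)
      rcases heq with h | h | h | h <;>
        (have := congrArg Fin.val h; omega)
  obtain ⟨C, hC, hCd⟩ := hcover
  refine ⟨?_, ?_, ?_, ?_⟩
  · -- acyclicity
    intro v hv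
    have hmono : ∀ a b : Fin n,
        (fun a b => (lab a b).Nonempty) a b → a < b := harc
    have htr : Transitive fun a b : Fin n => a < b := fun _ _ _ h1 h2 => lt_trans h1 h2
    have h2 := Relation.TransGen.mono hmono _ _ hv
    rw [Relation.transGen_eq_self] at h2
    exact lt_irrefl v h2
  · -- antichain max = 1
    constructor
    · refine ⟨{⟨0, by omega⟩}, Finset.card_singleton _, ?_⟩
      simp only [Finset.coe_singleton]
      exact Set.pairwise_singleton _ _
    · rintro m ⟨S, hScard, hS⟩
      by_contra hc
      push_neg at hc
      have h2 : 1 < S.card := by omega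
      obtain ⟨a, ha, b, hb, hab⟩ := Finset.one_lt_card.mp h2
      exact hS ha hb hab (tt_connected lab hlab a b hab)
  · exact ⟨⟨C, hC⟩, fun m ⟨D, hD⟩ => hlow m D hD⟩
  · exact ⟨⟨C, hC, hCd⟩, fun m ⟨D, hD, _⟩ => hlow m D hD⟩
end

section
/- Let 𝒫 = (P, λ) be a temporal oriented line. Then the minimum cardinality of a temporally disjoint path cover of 𝒫, the minimum cardinality of a temporal path cover of 𝒫, and the maximum size of a temporal antichain of 𝒫 are all equal (temporal oriented lines satisfy the Dilworth and TD-Dilworth properties). -/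
section OLDAux

variable {V : Type*} {lab : V → V → Finset ℕ}

/-- Restriction of a temporal path to a consecutive index range. -/
def TPath.restrict (P : TPath lab) (i0 L : ℕ) (h : i0 + L ≤ P.len) : TPath lab where
  len := L
  verts := fun j => P.verts ⟨i0 + j.val, by have := j.isLt; omega⟩
  times := fun j => P.times ⟨i0 + j.val, by have := j.isLt; omega⟩
  inj := by
    intro a b hab
    have h2 := congrArg Fin.val (P.inj hab)
    simp only [] at h2
    exact Fin.ext (by omega)
  mono := by
    intro a b hlt
    exact P.mono (by simp only [Fin.lt_def] at hlt ⊢; omega)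
  mem_lab := by
    intro j
    have h1 := P.mem_lab ⟨i0 + j.val, by have := j.isLt; omega⟩
    simp only [Fin.castSucc_mk, Fin.succ_mk] at h1
    have e1 : (⟨i0 + (j.castSucc).val, by have := j.isLt; omega⟩ : Fin (P.len + 1))
        = ⟨i0 + j.val, by have := j.isLt; omega⟩ := Fin.ext (by simp)
    have e2 : (⟨i0 + (j.succ).val, by have := j.isLt; omega⟩ : Fin (P.len + 1))
        = ⟨i0 + j.val + 1, by have := j.isLt; omega⟩ := Fin.ext (by simp; omega)
    simpa [e1, e2, Nat.add_assoc] using h1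

/-- The single-vertex temporal path. -/
def TPath.single (lab : V → V → Finset ℕ) (v : V) : TPath lab where
  len := 0
  verts := fun _ => v
  times := Fin.elim0
  inj := fun a b _ => Fin.ext (by omega)
  mono := fun a => a.elim0
  mem_lab := fun a => a.elim0

lemma pos_affine (pos : V → ℕ)
    (hinj : ∀ u v : V, pos u = pos v → u = v)
    (hadj : ∀ u v : V, (lab u v).Nonempty → (pos u + 1 = pos v ∨ pos v + 1 = pos u))
    (P : TPath lab) :
    (∀ i : Fin (P.len + 1), pos (P.verts i) = pos (P.verts 0) + i.val) ∨
    (∀ i : Fin (P.len + 1), pos (P.verts i) + i.val = pos (P.verts 0)) := by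
  set p : ℕ → ℕ := fun i => pos (P.verts ⟨min i P.len, Nat.lt_succ_of_le (min_le_right _ _)⟩)
    with hp
  have hpv : ∀ i : Fin (P.len + 1), p i.val = pos (P.verts i) := by
    intro i
    have : (⟨min i.val P.len, Nat.lt_succ_of_le (min_le_right _ _)⟩ : Fin (P.len+1)) = i :=
      Fin.ext (by have := i.isLt; simp; omega)
    simp [hp, this]
  have hstep : ∀ i, i < P.len → p (i+1) = p i + 1 ∨ p i = p (i+1) + 1 := by
    intro i h
    have hm := P.mem_lab ⟨i, h⟩
    have hne : (lab (P.verts (Fin.castSucc ⟨i, h⟩)) (P.verts (Fin.succ ⟨i, h⟩))).Nonempty :=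
      ⟨_, hm⟩
    have h2 := hadj _ _ hne
    have e1 : p i = pos (P.verts (Fin.castSucc ⟨i, h⟩)) := by
      have : (⟨min i P.len, Nat.lt_succ_of_le (min_le_right _ _)⟩ : Fin (P.len+1)) =
        Fin.castSucc ⟨i, h⟩ := Fin.ext (by simp; omega)
      simp [hp, this]
    have e2 : p (i+1) = pos (P.verts (Fin.succ ⟨i, h⟩)) := by
      have : (⟨min (i+1) P.len, Nat.lt_succ_of_le (min_le_right _ _)⟩ : Fin (P.len+1)) =
        Fin.succ ⟨i, h⟩ := Fin.ext (by simp; omega)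
      simp [hp, this]
    rw [e1, e2]
    omega
  have hflip : ∀ i, i + 2 ≤ P.len → p (i+2) ≠ p i := by
    intro i h hcontra
    have e1 : p (i+2) = pos (P.verts ⟨i+2, by omega⟩) := by
      have : (⟨min (i+2) P.len, Nat.lt_succ_of_le (min_le_right _ _)⟩ : Fin (P.len+1)) =
        ⟨i+2, by omega⟩ := Fin.ext (by simp; omega)
      simp [hp, this]
    have e2 : p i = pos (P.verts ⟨i, by omega⟩) := by
      have : (⟨min i P.len, Nat.lt_succ_of_le (min_le_right _ _)⟩ : Fin (P.len+1)) =
        ⟨i, by omega⟩ := Fin.ext (by simp; omega)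
      simp [hp, this]
    rw [e1, e2] at hcontra
    have := congrArg Fin.val (P.inj (hinj _ _ hcontra))
    simp only [] at this
    omega
  rcases Nat.eq_zero_or_pos P.len with h0 | hlen
  · left
    intro i
    have : i = 0 := Fin.ext (by have := i.isLt; omega)
    subst this
    simp
  rcases hstep 0 hlen with hA0 | hB0
  · left
    have hA : p 1 = p 0 + 1 := hA0
    have claim : ∀ i, i ≤ P.len → p i = p 0 + i := by
      intro i
      induction i using Nat.strong_induction_on with
      | _ i IH =>
        intro hi
        match i with
        | 0 => simp
        | 1 => omega
        | (m+2) =>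
          have h1 := IH (m+1) (by omega) (by omega)
          have h2 := IH m (by omega) (by omega)
          have hs : p (m+2) = p (m+1) + 1 ∨ p (m+1) = p (m+2) + 1 := hstep (m+1) (by omega)
          have hf := hflip m (by omega)
          omega
    intro i
    have h1 := claim i.val (by have := i.isLt; omega)
    rw [hpv] at h1
    have h0 := hpv 0
    simp only [Fin.val_zero] at h0
    omega
  · right
    have hB : p 0 = p 1 + 1 := hB0
    have claim : ∀ i, i ≤ P.len → p i + i = p 0 := by
      intro i
      induction i using Nat.strong_induction_on with
      | _ i IH =>
        intro hi
        match i with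
        | 0 => simp
        | 1 => omega
        | (m+2) =>
          have h1 := IH (m+1) (by omega) (by omega)
          have h2 := IH m (by omega) (by omega)
          have hs : p (m+2) = p (m+1) + 1 ∨ p (m+1) = p (m+2) + 1 := hstep (m+1) (by omega)
          have hf := hflip m (by omega)
          omega
    intro i
    have h1 := claim i.val (by have := i.isLt; omega)
    rw [hpv] at h1
    have h0 := hpv 0
    simp only [Fin.val_zero] at h0
    omega

end OLDAux
section OLDAux2

variable {V : Type*} {lab : V → V → Finset ℕ}

/-- The positions of the vertices of some temporal path form exactly the interval `[a,b]`. -/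
def Cov (lab : V → V → Finset ℕ) (pos : V → ℕ) (a b : ℕ) : Prop :=
  ∃ P : TPath lab, (∀ i, a ≤ pos (P.verts i) ∧ pos (P.verts i) ≤ b) ∧
    (∀ c, a ≤ c → c ≤ b → ∃ i, pos (P.verts i) = c)

lemma cov_single (pos : V → ℕ) (v : V) : Cov lab pos (pos v) (pos v) := by
  refine ⟨TPath.single lab v, fun i => ⟨le_refl _, le_refl _⟩, fun c h1 h2 => ⟨0, ?_⟩⟩
  have : pos ((TPath.single lab v).verts (0 : Fin 1)) = pos v := rfl
  exact this.trans (le_antisymm h1 h2)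

lemma cov_le {pos : V → ℕ} {a b : ℕ} (h : Cov lab pos a b) : a ≤ b := by
  obtain ⟨P, h1, _⟩ := h
  have := h1 0
  omega

lemma cov_restrict (pos : V → ℕ)
    (hinj : ∀ u v : V, pos u = pos v → u = v)
    (hadj : ∀ u v : V, (lab u v).Nonempty → (pos u + 1 = pos v ∨ pos v + 1 = pos u))
    (P : TPath lab) (i1 i2 : ℕ) (h1 : i1 ≤ i2) (h2 : i2 ≤ P.len) :
    Cov lab pos
      (min (pos (P.verts ⟨i1, by omega⟩)) (pos (P.verts ⟨i2, by omega⟩)))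
      (max (pos (P.verts ⟨i1, by omega⟩)) (pos (P.verts ⟨i2, by omega⟩))) := by
  set Q := P.restrict i1 (i2 - i1) (by omega) with hQdef
  have hQlen : Q.len = i2 - i1 := rfl
  have hQv : ∀ j : Fin (i2 - i1 + 1), Q.verts j = P.verts ⟨i1 + j.val, by have := j.isLt; omega⟩ :=
    fun j => rfl
  rcases pos_affine pos hinj hadj P with haff | haff
  · have e1 : pos (P.verts ⟨i1, by omega⟩) = pos (P.verts 0) + i1 := haff ⟨i1, by omega⟩
    have e2 : pos (P.verts ⟨i2, by omega⟩) = pos (P.verts 0) + i2 := haff ⟨i2, by omega⟩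
    refine ⟨Q, fun j => ?_, fun c hc1 hc2 => ?_⟩
    · have hj : j.val < Q.len + 1 := j.isLt
      have hq : pos (Q.verts j) = pos (P.verts 0) + (i1 + j.val) := by
        rw [hQv j]; exact haff _
      omega
    · refine ⟨⟨c - (pos (P.verts 0) + i1), by omega⟩, ?_⟩
      refine (congrArg pos (hQv ⟨c - (pos (P.verts 0) + i1), by omega⟩)).trans ?_
      simp only [Fin.val_mk]
      have := haff ⟨i1 + (c - (pos (P.verts 0) + i1)), by omega⟩
      simp only [Fin.val_mk] at this
      omega
  · have e1 : pos (P.verts ⟨i1, by omega⟩) + i1 = pos (P.verts 0) := haff ⟨i1, by omega⟩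
    have e2 : pos (P.verts ⟨i2, by omega⟩) + i2 = pos (P.verts 0) := haff ⟨i2, by omega⟩
    refine ⟨Q, fun j => ?_, fun c hc1 hc2 => ?_⟩
    · have hj : j.val < Q.len + 1 := j.isLt
      have hq : pos (Q.verts j) + (i1 + j.val) = pos (P.verts 0) := by
        rw [hQv j]; exact haff _
      omega
    · refine ⟨⟨pos (P.verts 0) - c - i1, by omega⟩, ?_⟩
      refine (congrArg pos (hQv ⟨pos (P.verts 0) - c - i1, by omega⟩)).trans ?_
      simp only [Fin.val_mk]
      have := haff ⟨i1 + (pos (P.verts 0) - c - i1), by omega⟩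
      simp only [Fin.val_mk] at this
      omega

lemma cov_shrink (pos : V → ℕ)
    (hinj : ∀ u v : V, pos u = pos v → u = v)
    (hadj : ∀ u v : V, (lab u v).Nonempty → (pos u + 1 = pos v ∨ pos v + 1 = pos u))
    {a b a' b' : ℕ} (h : Cov lab pos a b) (ha : a ≤ a') (hab : a' ≤ b') (hb : b' ≤ b) :
    Cov lab pos a' b' := by
  obtain ⟨P, hmem, hsurj⟩ := h
  obtain ⟨ia, hia⟩ := hsurj a' (by omega) (by omega)
  obtain ⟨ib, hib⟩ := hsurj b' (by omega) (by omega)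
  rcases le_total ia.val ib.val with hle | hle
  · have := cov_restrict pos hinj hadj P ia.val ib.val hle (by have := ib.isLt; omega)
    have ea : (⟨ia.val, by have := ia.isLt; omega⟩ : Fin (P.len + 1)) = ia := Fin.ext rfl
    have eb : (⟨ib.val, by have := ib.isLt; omega⟩ : Fin (P.len + 1)) = ib := Fin.ext rfl
    rw [ea, eb, hia, hib] at this
    rwa [min_eq_left hab, max_eq_right hab] at this
  · have := cov_restrict pos hinj hadj P ib.val ia.val hle (by have := ia.isLt; omega)
    have ea : (⟨ia.val, by have := ia.isLt; omega⟩ : Fin (P.len + 1)) = ia := Fin.ext rfl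
    have eb : (⟨ib.val, by have := ib.isLt; omega⟩ : Fin (P.len + 1)) = ib := Fin.ext rfl
    rw [ea, eb, hia, hib] at this
    rwa [min_eq_right hab, max_eq_left hab] at this

lemma conn_cov (pos : V → ℕ)
    (hinj : ∀ u v : V, pos u = pos v → u = v)
    (hadj : ∀ u v : V, (lab u v).Nonempty → (pos u + 1 = pos v ∨ pos v + 1 = pos u))
    {u v : V} (h : TempConnected lab u v) :
    Cov lab pos (min (pos u) (pos v)) (max (pos u) (pos v)) := by
  obtain ⟨P, hu, hv⟩ := h
  obtain ⟨ia, hia⟩ := hu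
  obtain ⟨ib, hib⟩ := hv
  rcases le_total ia.val ib.val with hle | hle
  · have := cov_restrict pos hinj hadj P ia.val ib.val hle (by have := ib.isLt; omega)
    have ea : (⟨ia.val, by have := ia.isLt; omega⟩ : Fin (P.len + 1)) = ia := Fin.ext rfl
    have eb : (⟨ib.val, by have := ib.isLt; omega⟩ : Fin (P.len + 1)) = ib := Fin.ext rfl
    rwa [ea, eb, hia, hib] at this
  · have := cov_restrict pos hinj hadj P ib.val ia.val hle (by have := ia.isLt; omega)
    have ea : (⟨ia.val, by have := ia.isLt; omega⟩ : Fin (P.len + 1)) = ia := Fin.ext rfl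
    have eb : (⟨ib.val, by have := ib.isLt; omega⟩ : Fin (P.len + 1)) = ib := Fin.ext rfl
    rw [ea, eb, hia, hib] at this
    rwa [min_comm, max_comm] at this

/-- Any temporal antichain is at most as large as any temporal path cover. -/
lemma antichain_le_cover (lab : V → V → Finset ℕ) (S : Finset V)
    (hS : IsTempAntichain lab ↑S) {m : ℕ} (C : Fin m → TPath lab) (hC : IsTPC lab C) :
    S.card ≤ m := by
  classical
  have key : ∀ v : V, ∃ i, v ∈ (C i).vertexSet := hC
  choose φ hφ using key
  have : S.card ≤ (Finset.univ : Finset (Fin m)).card := by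
    apply Finset.card_le_card_of_injOn φ (fun s _ => Finset.mem_univ _)
    intro s hs t ht hst
    by_contra hne
    exact hS (by simpa using hs) (by simpa using ht) hne ⟨C (φ s), hφ s, hst ▸ hφ t⟩
  simpa using this

end OLDAux2
/-- Temporal oriented lines satisfy the Dilworth and TD-Dilworth properties: the minimum
sizes of a temporally disjoint path cover and of a temporal path cover, and the maximum
size of a temporal antichain, all coincide. -/
theorem oriented_line_dilworth {V : Type*} [Fintype V] (lab : V → V → Finset ℕ)
    (hpos : PositiveLabels lab)
    (horient : ∀ u v : V, (lab u v).Nonempty → lab v u = ∅)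
    (hline : Nonempty (underlyingGraph lab ≃g SimpleGraph.pathGraph (Fintype.card V))) :
    ∃ k : ℕ, IsLeast (tdpcSizes lab) k ∧ IsLeast (tpcSizes lab) k ∧
      IsGreatest (antichainSizes lab) k := by
  classical
  obtain ⟨e⟩ := hline
  set n := Fintype.card V with hn
  set pos : V → ℕ := fun v => ((e v : Fin n) : ℕ) with hposdef
  have hposlt : ∀ v, pos v < n := fun v => (e v).isLt
  have hinj : ∀ u v : V, pos u = pos v → u = v := fun u v h =>
    e.toEquiv.injective (Fin.ext h)
  have hsurj : ∀ a, a < n → ∃ v, pos v = a := by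
    intro a ha
    refine ⟨e.symm ⟨a, ha⟩, ?_⟩
    show ((e (e.symm ⟨a, ha⟩) : Fin n) : ℕ) = a
    rw [RelIso.apply_symm_apply]
  have hadj : ∀ u v : V, (lab u v).Nonempty → (pos u + 1 = pos v ∨ pos v + 1 = pos u) := by
    intro u v hne
    have hloop : u ≠ v := by
      rintro rfl
      exact Finset.not_nonempty_empty (horient _ _ hne ▸ hne)
    have hA : (underlyingGraph lab).Adj u v := ⟨hloop, Or.inl hne⟩
    have h2 := e.map_adj_iff.mpr hA
    rw [SimpleGraph.pathGraph_adj] at h2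
    exact h2
  have hcovlt : ∀ a b, Cov lab pos a b → b < n := by
    intro a b h
    have hab := cov_le h
    obtain ⟨P, hm, hs⟩ := h
    obtain ⟨i, hi⟩ := hs b hab (le_refl _)
    rw [← hi]
    exact hposlt _
  have hbdd : ∀ a, BddAbove {b | Cov lab pos a b} :=
    fun a => ⟨n, fun b hb => (hcovlt a b hb).le⟩
  let f : ℕ → ℕ := fun a => if a < n then sSup {b | Cov lab pos a b} else a
  have hcovaa : ∀ a, a < n → Cov lab pos a a := by
    intro a ha
    obtain ⟨v, hv⟩ := hsurj a ha
    exact hv ▸ cov_single pos v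
  have hcov_f : ∀ a, a < n → Cov lab pos a (f a) := by
    intro a ha
    have hne : {b | Cov lab pos a b}.Nonempty := ⟨a, hcovaa a ha⟩
    have := Nat.sSup_mem hne (hbdd a)
    simpa [f, if_pos ha] using this
  have hf_max : ∀ a, a < n → ∀ b, Cov lab pos a b → b ≤ f a := by
    intro a ha b hb
    have := le_csSup (hbdd a) hb
    simpa [f, if_pos ha] using this
  have hf_ge : ∀ a, a ≤ f a := by
    intro a
    by_cases ha : a < n
    · exact hf_max a ha a (hcovaa a ha)
    · simp [f, ha]
  obtain ⟨g, hg0, hgs⟩ : ∃ g : ℕ → ℕ, g 0 = 0 ∧ ∀ j, g (j + 1) = f (g j) + 1 :=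
    ⟨fun j => Nat.rec 0 (fun _ x => f x + 1) j, rfl, fun j => rfl⟩
  have hgmono : StrictMono g := strictMono_nat_of_lt_succ (fun j => by
    rw [hgs]; have := hf_ge (g j); omega)
  have hgle : ∀ j, j ≤ g j := by
    intro j
    induction j with
    | zero => omega
    | succ m ih => have h1 := hgs m; have h2 := hf_ge (g m); omega
  have hex : ∃ j, n ≤ g j := ⟨n, hgle n⟩
  haveI : DecidablePred fun j => n ≤ g j := fun j => Nat.decLe _ _
  obtain ⟨k, hk1, hk2⟩ : ∃ k, n ≤ g k ∧ ∀ j, j < k → g j < n :=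
    ⟨Nat.find hex, Nat.find_spec hex, fun j hj => lt_of_not_ge (Nat.find_min hex hj)⟩
  have hgk : g k = n := by
    rcases Nat.eq_zero_or_pos k with h0 | hkpos
    · rw [h0, hg0] at hk1 ⊢
      omega
    · obtain ⟨m, hm⟩ := Nat.exists_eq_succ_of_ne_zero (by omega : k ≠ 0)
      have h1 := hk2 m (by omega)
      have h2 := hcovlt _ _ (hcov_f (g m) h1)
      have h3 := hf_max (g m) h1 _ (hcov_f (g m) h1)
      rw [hm] at hk1 ⊢
      rw [hgs] at hk1 ⊢
      omega
  have hCex : ∀ j : Fin k, ∃ P : TPath lab,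
      (∀ i, g j.val ≤ pos (P.verts i) ∧ pos (P.verts i) ≤ f (g j.val)) ∧
      (∀ c, g j.val ≤ c → c ≤ f (g j.val) → ∃ i, pos (P.verts i) = c) :=
    fun j => hcov_f (g j.val) (hk2 j.val j.isLt)
  choose C hC1 hC2 using hCex
  have hTPC : IsTPC lab C := by
    intro v
    have hvn : pos v < n := hposlt v
    have hkpos : 0 < k := by
      by_contra h
      have h0 : k = 0 := by omega
      rw [h0, hg0] at hgk
      omega
    obtain ⟨j, hj1, hjlt, hj2⟩ : ∃ j, g j ≤ pos v ∧ j < k ∧ ¬ (g (j + 1) ≤ pos v) := by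
      have h1 : g (Nat.findGreatest (fun j => g j ≤ pos v) k) ≤ pos v :=
        Nat.findGreatest_spec (P := fun j => g j ≤ pos v) (Nat.zero_le k)
          (show g 0 ≤ pos v by rw [hg0]; omega)
      have h2 : Nat.findGreatest (fun j => g j ≤ pos v) k ≤ k :=
        Nat.findGreatest_le (P := fun j => g j ≤ pos v) k
      have h3 : Nat.findGreatest (fun j => g j ≤ pos v) k < k := by
        rcases lt_or_eq_of_le h2 with h | h
        · exact h
        · rw [h] at h1; omega
      refine ⟨Nat.findGreatest (fun j => g j ≤ pos v) k, h1, h3,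
        Nat.findGreatest_is_greatest (P := fun j => g j ≤ pos v) (n := k)
          (Nat.lt_succ_self _) (Nat.succ_le_of_lt h3)⟩
    rw [hgs] at hj2
    obtain ⟨i, hi⟩ := hC2 ⟨j, hjlt⟩ (pos v) hj1
      (by rw [show ((⟨j, hjlt⟩ : Fin k) : ℕ) = j from rfl]; omega)
    exact ⟨⟨j, hjlt⟩, ⟨i, hinj _ _ hi⟩⟩
  have hdisjsets : ∀ i j : Fin k, i ≠ j → ∀ w, w ∈ (C i).vertexSet → w ∈ (C j).vertexSet → False := by
    intro i j hne w hwi hwj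
    obtain ⟨a, ha⟩ := hwi
    obtain ⟨b, hb⟩ := hwj
    have h1 := hC1 i a
    have h2 := hC1 j b
    rw [ha] at h1
    rw [hb] at h2
    have hne' : i.val ≠ j.val := fun h => hne (Fin.ext h)
    rcases Nat.lt_or_ge i.val j.val with h | h
    · have h3 := hgs i.val
      have h4 := hgmono.monotone (show i.val + 1 ≤ j.val by omega)
      omega
    · have h3 := hgs j.val
      have h4 := hgmono.monotone (show j.val + 1 ≤ i.val by omega)
      omega
  have hdisj : ∀ i j : Fin k, i ≠ j → TDisjoint (C i) (C j) := by
    intro i j hne a b hshare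
    exfalso
    rcases hshare with h | h | h | h
    · exact hdisjsets i j hne _ ⟨a.castSucc, rfl⟩ ⟨b.castSucc, h.symm⟩
    · exact hdisjsets i j hne _ ⟨a.castSucc, rfl⟩ ⟨b.succ, h.symm⟩
    · exact hdisjsets i j hne _ ⟨a.succ, rfl⟩ ⟨b.castSucc, h.symm⟩
    · exact hdisjsets i j hne _ ⟨a.succ, rfl⟩ ⟨b.succ, h.symm⟩
  choose vtx hvtx using fun j : Fin k => hsurj (g j.val) (hk2 j.val j.isLt)
  have hvinj : Function.Injective vtx := by
    intro i j h
    have h2 : g i.val = g j.val := by rw [← hvtx i, ← hvtx j, h]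
    exact Fin.ext (hgmono.injective h2)
  set S : Finset V := Finset.image vtx Finset.univ with hSdef
  have hScard : S.card = k := by
    rw [hSdef, Finset.card_image_of_injective _ hvinj, Finset.card_univ, Fintype.card_fin]
  have main : ∀ i j : Fin k, i.val < j.val → TempConnected lab (vtx i) (vtx j) → False := by
    intro i j hij hconn
    have hc := conn_cov pos hinj hadj hconn
    rw [hvtx i, hvtx j] at hc
    rw [min_eq_left (hgmono.monotone hij.le), max_eq_right (hgmono.monotone hij.le)] at hc
    have hjk : j.val - 1 < k := by have := j.isLt; omega
    have hc2 : Cov lab pos (g (j.val - 1)) (g j.val) :=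
      cov_shrink pos hinj hadj hc (hgmono.monotone (by omega : i.val ≤ j.val - 1))
        (hgmono.monotone (by omega : j.val - 1 ≤ j.val)) (le_refl _)
    have h5 := hf_max (g (j.val - 1)) (hk2 _ hjk) _ hc2
    have h6 := hgs (j.val - 1)
    have h7 : j.val - 1 + 1 = j.val := by omega
    rw [h7] at h6
    omega
  have hSanti : IsTempAntichain lab ↑S := by
    intro u hu v hv huv hconn
    rw [hSdef] at hu hv
    simp only [Finset.coe_image, Finset.coe_univ, Set.image_univ, Set.mem_range] at hu hv
    obtain ⟨i, rfl⟩ := hu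
    obtain ⟨j, rfl⟩ := hv
    have hij : i.val ≠ j.val := fun h => huv (congrArg vtx (Fin.ext h))
    rcases Nat.lt_or_ge i.val j.val with h | h
    · exact main i j h hconn
    · exact main j i (by omega) ⟨hconn.choose, hconn.choose_spec.2, hconn.choose_spec.1⟩
  refine ⟨k, ⟨⟨C, hTPC, hdisj⟩, ?_⟩, ⟨⟨C, hTPC⟩, ?_⟩, ⟨⟨S, hScard, hSanti⟩, ?_⟩⟩
  · rintro m ⟨C', hC', _⟩
    have := antichain_le_cover lab S hSanti C' hC'
    omega
  · rintro m ⟨C', hC'⟩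
    have := antichain_le_cover lab S hSanti C' hC'
    omega
  · rintro m ⟨S', hS'card, hS'⟩
    have := antichain_le_cover lab S' hS' C hTPC
    omega
end

section
/- Let 𝒯 = (T, λ) be a temporal rooted directed tree. Then the minimum cardinality of a temporally disjoint path cover of 𝒯, the minimum cardinality of a temporal path cover of 𝒯, and the maximum size of a temporal antichain of 𝒯 are all equal (temporal rooted directed trees satisfy the Dilworth and TD-Dilworth properties). -/
namespace TPath

variable {V : Type*} {lab : V → V → Finset ℕ}

/-- the trivial one-vertex path -/
def triv (lab : V → V → Finset ℕ) (v : V) : TPath lab where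
  len := 0
  verts := fun _ => v
  times := Fin.elim0
  inj := fun a b _ => Fin.ext (by omega)
  mono := fun a => a.elim0
  mem_lab := fun i => i.elim0

@[simp] lemma triv_vertexSet (v : V) : (triv lab v).vertexSet = {v} := by
  ext w; simp [vertexSet, triv, eq_comm]

@[simp] lemma triv_len (v : V) : (triv lab v).len = 0 := rfl
@[simp] lemma triv_verts (v : V) (i) : (triv lab v).verts i = v := rfl

/-- head time of a path, `⊤` if trivial -/
noncomputable def hd (P : TPath lab) : ℕ∞ :=
  if h : 0 < P.len then ((P.times ⟨0, h⟩ : ℕ) : ℕ∞) else ⊤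

@[simp] lemma hd_triv (v : V) : (triv lab v).hd = ⊤ := rfl

lemma hd_of_pos (P : TPath lab) (h : 0 < P.len) : P.hd = ((P.times ⟨0, h⟩ : ℕ) : ℕ∞) := by
  simp [hd, h]

/-- prepend a vertex to a path -/
def cons (P : TPath lab) (p : V) (s : ℕ) (h1 : p ∉ P.vertexSet)
    (h2 : s ∈ lab p (P.verts 0)) (h3 : ∀ h : 0 < P.len, s < P.times ⟨0, h⟩) : TPath lab where
  len := P.len + 1
  verts := Fin.cases p P.verts
  times := Fin.cases s P.times
  inj := by
    intro a b hab
    induction a using Fin.cases with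
    | zero =>
      induction b using Fin.cases with
      | zero => rfl
      | succ b => simp only [Fin.cases_zero, Fin.cases_succ] at hab
                  exact absurd ⟨b, hab.symm⟩ h1
    | succ a =>
      induction b using Fin.cases with
      | zero => simp only [Fin.cases_zero, Fin.cases_succ] at hab
                exact absurd ⟨a, hab⟩ h1
      | succ b => simp only [Fin.cases_succ] at hab
                  exact congrArg Fin.succ (P.inj hab)
  mono := by
    intro a b hab
    induction a using Fin.cases with
    | zero =>
      induction b using Fin.cases with
      | zero => exact absurd hab (lt_irrefl _)
      | succ b =>
        simp only [Fin.cases_zero, Fin.cases_succ]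
        have h0 : 0 < P.len := Fin.pos_iff_nonempty.mpr ⟨b⟩
        exact lt_of_lt_of_le (h3 h0) (P.mono.monotone (by simp [Fin.le_def]))
    | succ a =>
      induction b using Fin.cases with
      | zero => exact absurd hab (by rw [Fin.lt_def]; simp)
      | succ b =>
        simp only [Fin.cases_succ]
        exact P.mono (Fin.succ_lt_succ_iff.mp hab)
  mem_lab := by
    intro i
    induction i using Fin.cases with
    | zero =>
      have e1 : ((0 : Fin (P.len + 1)).castSucc) = (0 : Fin (P.len + 2)) := rfl
      have e2 : ((0 : Fin (P.len + 1)).succ) = Fin.succ (0 : Fin (P.len + 1)) := rfl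
      exact h2
    | succ i =>
      have e1 : (Fin.succ i).castSucc = Fin.succ i.castSucc := by
        ext; simp
      have e2 : (Fin.succ i).succ = Fin.succ i.succ := rfl
      rw [e1, e2]
      simp only [Fin.cases_succ]
      exact P.mem_lab i

@[simp] lemma cons_len (P : TPath lab) (p s h1 h2 h3) : (P.cons p s h1 h2 h3).len = P.len + 1 := rfl

@[simp] lemma cons_verts_zero (P : TPath lab) (p s h1 h2 h3) :
    (P.cons p s h1 h2 h3).verts 0 = p := rfl

@[simp] lemma cons_vertexSet (P : TPath lab) (p s h1 h2 h3) :
    (P.cons p s h1 h2 h3).vertexSet = insert p P.vertexSet := by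
  ext w
  constructor
  · rintro ⟨i, rfl⟩
    induction i using Fin.cases with
    | zero => left; rfl
    | succ i => right; exact ⟨i, rfl⟩
  · rintro (rfl | ⟨i, rfl⟩)
    · exact ⟨0, rfl⟩
    · exact ⟨i.succ, by simp [cons]⟩

lemma cons_hd (P : TPath lab) (p s h1 h2 h3) : (P.cons p s h1 h2 h3).hd = (s : ℕ∞) := by
  have : 0 < (P.cons p s h1 h2 h3).len := Nat.succ_pos _
  rw [hd_of_pos _ this]
  norm_cast

end TPath

namespace TPath

variable {V : Type*} {lab : V → V → Finset ℕ}

/-- subpath from index i to index j -/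
def subpath (P : TPath lab) (i j : Fin (P.len + 1)) (hij : i ≤ j) : TPath lab where
  len := j.val - i.val
  verts := fun k => P.verts ⟨i.val + k.val, by omega⟩
  times := fun k => P.times ⟨i.val + k.val, by omega⟩
  inj := by
    intro a b hab
    have h2 := congrArg Fin.val (P.inj hab)
    simp only [Fin.val_mk] at h2
    exact Fin.ext (by omega)
  mono := by
    intro a b hab
    exact P.mono (by simp only [Fin.mk_lt_mk]; omega)
  mem_lab := by
    intro k
    have h1 : i.val + k.val < P.len := by omega
    have := P.mem_lab ⟨i.val + k.val, h1⟩
    convert this using 3 <;> (ext; simp) <;> omega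

@[simp] lemma subpath_len (P : TPath lab) (i j hij) : (P.subpath i j hij).len = j.val - i.val := rfl

lemma subpath_verts (P : TPath lab) (i j hij) (k) :
    (P.subpath i j hij).verts k = P.verts ⟨i.val + k.val, by
      have := k.isLt; simp only [subpath_len] at this; omega⟩ := rfl

lemma subpath_verts_zero (P : TPath lab) (i j hij) :
    (P.subpath i j hij).verts 0 = P.verts i := by
  rw [subpath_verts]; congr 1

lemma subpath_verts_last (P : TPath lab) (i j hij) :
    (P.subpath i j hij).verts (Fin.last _) = P.verts j := by
  rw [subpath_verts]; congr 1; exact Fin.ext (by simp [Fin.last]; omega)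

lemma subpath_fromTo (P : TPath lab) (i j hij) :
    (P.subpath i j hij).FromTo (P.verts i) (P.verts j) :=
  ⟨subpath_verts_zero P i j hij, subpath_verts_last P i j hij⟩

lemma subpath_times (P : TPath lab) (i j hij) (k) :
    (P.subpath i j hij).times k = P.times ⟨i.val + k.val, by
      have := k.isLt; simp only [subpath_len] at this; omega⟩ := rfl


lemma subpath_times_zero (P : TPath lab) (i j : Fin (P.len + 1)) (hij : i ≤ j)
    (h : 0 < (P.subpath i j hij).len) :
    (P.subpath i j hij).times ⟨0, h⟩ = P.times ⟨i.val, by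
      rw [TPath.subpath_len] at h; omega⟩ := by
  rw [subpath_times]
  congr 1

lemma chain_aux (P : TPath lab) : ∀ (d : ℕ) (i j : Fin (P.len + 1)), i.val + d = j.val →
    Relation.ReflTransGen (fun a b => (lab a b).Nonempty) (P.verts i) (P.verts j) := by
  intro d
  induction d with
  | zero =>
    intro i j h
    have : i = j := Fin.ext (by omega)
    subst this
    exact .refl
  | succ d ih =>
    intro i j h
    have hl : i.val + d < P.len := by omega
    refine .tail (ih i ⟨i.val + d, by omega⟩ rfl) ?_
    have hm := P.mem_lab ⟨i.val + d, hl⟩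
    refine ⟨P.times ⟨i.val + d, hl⟩, ?_⟩
    convert hm using 3 <;> (ext; simp) <;> omega

lemma chain (P : TPath lab) (i j : Fin (P.len + 1)) (hij : i ≤ j) :
    Relation.ReflTransGen (fun a b => (lab a b).Nonempty) (P.verts i) (P.verts j) :=
  chain_aux P (j.val - i.val) i j (by omega)

lemma head_mem (Q : TPath lab) (h : 0 < Q.len) :
    Q.times ⟨0, h⟩ ∈ lab (Q.verts 0) (Q.verts ⟨1, by omega⟩) := by
  have := Q.mem_lab ⟨0, h⟩
  convert this using 3 <;> (ext; simp)

end TPath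

/-- extract a directed temporal path between two temporally connected vertices -/
lemma TempConnected.exists_fromTo {V : Type*} {lab : V → V → Finset ℕ} {u w : V}
    (h : TempConnected lab u w) (hne : u ≠ w) :
    (∃ Q : TPath lab, Q.FromTo u w ∧ 0 < Q.len) ∨
    (∃ Q : TPath lab, Q.FromTo w u ∧ 0 < Q.len) := by
  obtain ⟨P, ⟨i, hi⟩, ⟨j, hj⟩⟩ := h
  rcases lt_trichotomy i j with hij | hij | hij
  · left
    refine ⟨P.subpath i j hij.le,
      ⟨by rw [TPath.subpath_verts_zero]; exact hi, by rw [TPath.subpath_verts_last]; exact hj⟩, ?_⟩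
    simp only [TPath.subpath_len]
    have := Fin.lt_def.mp hij
    omega
  · exact absurd (hi ▸ hij ▸ hj) (by exact hne)
  · right
    refine ⟨P.subpath j i hij.le,
      ⟨by rw [TPath.subpath_verts_zero]; exact hj, by rw [TPath.subpath_verts_last]; exact hi⟩, ?_⟩
    simp only [TPath.subpath_len]
    have := Fin.lt_def.mp hij
    omega

/-- two temporally connected vertices are related by reflexive-transitive arc reachability -/
lemma TempConnected.reflTransGen {V : Type*} {lab : V → V → Finset ℕ} {u w : V}
    (h : TempConnected lab u w) :
    Relation.ReflTransGen (fun a b => (lab a b).Nonempty) u w ∨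
    Relation.ReflTransGen (fun a b => (lab a b).Nonempty) w u := by
  obtain ⟨P, ⟨i, hi⟩, ⟨j, hj⟩⟩ := h
  rcases le_total i j with hij | hij
  · left; rw [← hi, ← hj]; exact P.chain i j hij
  · right; rw [← hi, ← hj]; exact P.chain j i hij

section GraphFacts

variable {V : Type*} [Fintype V] [DecidableEq V] {lab : V → V → Finset ℕ}

/-- arc relation -/
abbrev Arc (lab : V → V → Finset ℕ) : V → V → Prop := fun a b => (lab a b).Nonempty

variable (horient : ∀ u v : V, (lab u v).Nonempty → lab v u = ∅)

include horient

lemma arc_ne {a b : V} (h : Arc lab a b) : a ≠ b := by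
  rintro rfl
  have h2 : (lab a a).Nonempty := h
  rw [horient a a h2] at h2
  exact h2.ne_empty rfl

lemma arc_asymm {a b : V} (h : Arc lab a b) : ¬ Arc lab b a := by
  intro h'
  have h2 : (lab a b).Nonempty := h
  rw [horient b a h'] at h2
  exact h2.ne_empty rfl

lemma arc_adj {a b : V} (h : Arc lab a b) : (underlyingGraph lab).Adj a b :=
  ⟨arc_ne horient h, Or.inl h⟩

variable (htree : (underlyingGraph lab).IsTree) {r : V}
  (hroot : ∀ v : V, Relation.ReflTransGen (Arc lab) r v)

include htree hroot

/-- every edge of the tree receives an incoming-arc orientation towards a unique non-root head -/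
lemma parent_unique_and_root : (∀ u : V, ¬ Arc lab u r) ∧
    (∀ u u' v : V, Arc lab u v → Arc lab u' v → u = u') := by
  classical
  -- a choice of in-neighbor for every non-root vertex
  have hin : ∀ v : V, v ≠ r → ∃ u, Arc lab u v := by
    intro v hv
    rcases (hroot v).cases_tail with h | ⟨c, _, hc⟩
    · exact absurd h hv
    · exact ⟨c, hc⟩
  set s : V → V := fun v => if h : ∃ u, Arc lab u v then h.choose else v with hs
  have hsv : ∀ v : V, v ≠ r → Arc lab (s v) v := by
    intro v hv
    obtain ⟨u, hu⟩ := hin v hv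
    simp only [hs, dif_pos (⟨u, hu⟩ : ∃ u, Arc lab u v)]
    exact (⟨u, hu⟩ : ∃ u, Arc lab u v).choose_spec
  set D : Finset V := Finset.univ.erase r with hD
  set φ : V → Sym2 V := fun v => s(s v, v) with hφ
  have himg : D.image φ ⊆ (underlyingGraph lab).edgeFinset := by
    intro e he
    obtain ⟨v, hv, rfl⟩ := Finset.mem_image.mp he
    rw [SimpleGraph.mem_edgeFinset]
    exact arc_adj horient (hsv v (Finset.ne_of_mem_erase hv))
  have hinj : Set.InjOn φ D := by
    intro v hv v' hv' hvv'
    simp only [hφ, Sym2.eq, Sym2.rel_iff', Prod.mk.injEq, Prod.swap_prod_mk] at hvv'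
    rcases hvv' with ⟨_, h2⟩ | ⟨h1, h2⟩
    · exact h2
    · exfalso
      have a1 := hsv v (Finset.ne_of_mem_erase (Finset.mem_coe.mp hv))
      have a2 := hsv v' (Finset.ne_of_mem_erase (Finset.mem_coe.mp hv'))
      rw [h1] at a1
      rw [← h2] at a2
      exact arc_asymm horient a1 a2
  have hcardD : D.card = Fintype.card V - 1 := by
    rw [hD, Finset.card_erase_of_mem (Finset.mem_univ r), Finset.card_univ]
  have hcardE : (underlyingGraph lab).edgeFinset.card + 1 = Fintype.card V := htree.card_edgeFinset
  have himgcard : (D.image φ).card = D.card := Finset.card_image_of_injOn hinj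
  have heq : D.image φ = (underlyingGraph lab).edgeFinset := by
    apply Finset.eq_of_subset_of_card_le himg
    omega
  -- every edge is of the form s(s v, v) with v ≠ r
  have hedge : ∀ u v : V, Arc lab u v → v ≠ r ∧ u = s v := by
    intro u v huv
    have he : s(u, v) ∈ (underlyingGraph lab).edgeFinset := by
      rw [SimpleGraph.mem_edgeFinset]; exact arc_adj horient huv
    rw [← heq] at he
    obtain ⟨w, hw, hwe⟩ := Finset.mem_image.mp he
    have hwr : w ≠ r := Finset.ne_of_mem_erase hw
    simp only [hφ, Sym2.eq, Sym2.rel_iff', Prod.mk.injEq, Prod.swap_prod_mk] at hwe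
    rcases hwe with ⟨h1, h2⟩ | ⟨h1, h2⟩
    · subst h2; exact ⟨hwr, h1.symm⟩
    · exfalso
      have a2 := hsv w hwr
      rw [h1] at a2
      rw [← h2] at huv
      exact arc_asymm horient huv a2
  constructor
  · intro u hu
    exact (hedge u r hu).1 rfl
  · intro u u' v h h'
    rw [(hedge u v h).2, (hedge u' v h').2]

lemma arc_dist_lt : ∀ u v : V, Arc lab u v →
    (underlyingGraph lab).dist r u < (underlyingGraph lab).dist r v := by
  classical
  obtain ⟨hnr, huniq⟩ := parent_unique_and_root horient htree hroot
  set G := underlyingGraph lab with hG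
  have hconn : G.Connected := htree.isConnected
  have key : ∀ n : ℕ, ∀ u v : V, G.dist r v ≤ n → Arc lab u v → G.dist r u < G.dist r v := by
    intro n
    induction n with
    | zero =>
      intro u v hdv huv
      have hvr : v ≠ r := fun h => hnr u (h ▸ huv)
      have : G.dist r v ≠ 0 := by
        intro h0
        exact hvr ((hconn.dist_eq_zero_iff).mp h0).symm
      omega
    | succ n ih =>
      intro u v hdv huv
      have hvr : v ≠ r := fun h => hnr u (h ▸ huv)
      have hdv0 : 0 < G.dist r v := by
        rcases Nat.eq_zero_or_pos (G.dist r v) with h0 | h0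
        · exact absurd ((hconn.dist_eq_zero_iff).mp h0).symm hvr
        · exact h0
      -- find neighbor w of v with dist r w = dist r v - 1
      obtain ⟨p, hp⟩ := (hconn r v).exists_walk_length_eq_dist
      obtain ⟨w, hadj, hdw⟩ : ∃ w, G.Adj w v ∧ G.dist r w + 1 ≤ G.dist r v := by
        cases hpr : p.reverse with
        | nil =>
          exfalso
          have h0 : p.length = 0 := by
            have := congrArg (SimpleGraph.Walk.length) hpr
            simpa using this
          rw [hp] at h0
          omega
        | @cons _ w _ hadj q =>
          refine ⟨w, hadj.symm, ?_⟩
          have hq : G.dist r w ≤ q.length := by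
            rw [SimpleGraph.dist_comm]
            exact SimpleGraph.dist_le q
          have hlen : q.length + 1 = G.dist r v := by
            have := congrArg (SimpleGraph.Walk.length) hpr
            simp only [SimpleGraph.Walk.length_reverse, SimpleGraph.Walk.length_cons] at this
            omega
          omega
      rcases hadj.2 with harc | harc
      · -- Arc w v, so w = u
        have hwu : w = u := huniq w u v harc huv
        rw [hwu] at hdw
        omega
      · -- Arc v w : then by IH at w, dist v < dist w, contradiction
        exfalso
        have hwr : w ≠ r := fun h => hnr v (h ▸ harc)
        have hdw' : G.dist r w ≤ n := by omega
        have := ih v w hdw' harc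
        omega
  intro u v huv
  exact key (G.dist r v) u v le_rfl huv

end GraphFacts

section SubtreeFacts

variable {V : Type*} [Fintype V] [DecidableEq V] {lab : V → V → Finset ℕ} {r : V}

/-- the subtree (set of vertices reachable from v) -/
def subT (lab : V → V → Finset ℕ) (v : V) : Set V :=
  {w | Relation.ReflTransGen (Arc lab) v w}

lemma mem_subT_self (v : V) : v ∈ subT lab v := Relation.ReflTransGen.refl

lemma sub_mono {p c : V} (h : Arc lab p c) : subT lab c ⊆ subT lab p :=
  fun _ hx => Relation.ReflTransGen.trans (Relation.ReflTransGen.single h) hx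

variable (horient : ∀ u v : V, (lab u v).Nonempty → lab v u = ∅)
  (htree : (underlyingGraph lab).IsTree)
  (hroot : ∀ v : V, Relation.ReflTransGen (Arc lab) r v)

include horient htree hroot

lemma rtg_dist_le {u v : V} (h : Relation.ReflTransGen (Arc lab) u v) :
    (underlyingGraph lab).dist r u ≤ (underlyingGraph lab).dist r v := by
  induction h with
  | refl => exact le_rfl
  | tail _ hbc ih => exact ih.trans (arc_dist_lt horient htree hroot _ _ hbc).le

lemma not_mem_sub {p c : V} (h : Arc lab p c) : p ∉ subT lab c := by
  intro hp
  have h1 := arc_dist_lt horient htree hroot _ _ h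
  have h2 := rtg_dist_le horient htree hroot hp
  omega

lemma rtg_comparable {a b x : V} (ha : Relation.ReflTransGen (Arc lab) a x)
    (hb : Relation.ReflTransGen (Arc lab) b x) :
    Relation.ReflTransGen (Arc lab) a b ∨ Relation.ReflTransGen (Arc lab) b a := by
  obtain ⟨-, huniq⟩ := parent_unique_and_root horient htree hroot
  have key : ∀ n : ℕ, ∀ x a b : V, (underlyingGraph lab).dist r x ≤ n →
      Relation.ReflTransGen (Arc lab) a x → Relation.ReflTransGen (Arc lab) b x →
      Relation.ReflTransGen (Arc lab) a b ∨ Relation.ReflTransGen (Arc lab) b a := by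
    intro n
    induction n with
    | zero =>
      intro x a b hd ha hb
      rcases ha.cases_tail with rfl | ⟨y, hay, hyx⟩
      · exact Or.inr hb
      · rcases hb.cases_tail with rfl | ⟨y', hby', hy'x⟩
        · exact Or.inl ha
        · exfalso
          have := arc_dist_lt horient htree hroot _ _ hyx
          omega
    | succ n ih =>
      intro x a b hd ha hb
      rcases ha.cases_tail with rfl | ⟨y, hay, hyx⟩
      · exact Or.inr hb
      · rcases hb.cases_tail with rfl | ⟨y', hby', hy'x⟩
        · exact Or.inl ha
        · have hyy' : y = y' := huniq y y' x hyx hy'x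
          subst hyy'
          have := arc_dist_lt horient htree hroot _ _ hyx
          exact ih y a b (by omega) hay hby'
  exact key ((underlyingGraph lab).dist r x) x a b le_rfl ha hb

/-- subtrees of distinct children never meet -/
lemma sibling_eq {p c c' x : V} (hc : Arc lab p c) (hc' : Arc lab p c')
    (hx : x ∈ subT lab c) (hx' : x ∈ subT lab c') : c = c' := by
  obtain ⟨-, huniq⟩ := parent_unique_and_root horient htree hroot
  have hcomp := rtg_comparable horient htree hroot hx hx'
  have main : ∀ d d' : V, Arc lab p d → Arc lab p d' →
      Relation.ReflTransGen (Arc lab) d d' → d = d' := by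
    intro d d' hd hd' hdd'
    rcases hdd'.cases_tail with rfl | ⟨w, hdw, hwd'⟩
    · rfl
    · exfalso
      have hwp : w = p := huniq w p d' hwd' hd'
      subst hwp
      have h1 := arc_dist_lt horient htree hroot _ _ hd
      have h2 := rtg_dist_le horient htree hroot hdw
      omega
  rcases hcomp with h | h
  · exact main c c' hc hc' h
  · exact (main c' c hc' hc h).symm

lemma sub_ncard_lt {p c : V} (h : Arc lab p c) : (subT lab c).ncard < (subT lab p).ncard := by
  apply Set.ncard_lt_ncard _ (Set.toFinite _)
  constructor
  · exact sub_mono h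
  · intro hsub
    exact not_mem_sub horient htree hroot h (hsub (mem_subT_self p))

lemma sub_decomp {p x : V} (hx : x ∈ subT lab p) :
    x = p ∨ ∃ c, Arc lab p c ∧ x ∈ subT lab c := by
  rcases hx.cases_head with h | ⟨c, hpc, hcx⟩
  · exact Or.inl h.symm
  · exact Or.inr ⟨c, hpc, hcx⟩

end SubtreeFacts

section Main

variable {V : Type*} [Fintype V] [DecidableEq V]

/-- the invariant carried through the bottom-up greedy construction:
a partition of the subtree of `v` into temporal paths `P₀ :: L` with `P₀` topped at `v`,
together with an antichain `A` of matching size such that every temporal path from `v`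
to a member of `A` starts no later than the head time of `P₀`. -/
def GoodAt (lab : V → V → Finset ℕ) (v : V) (P₀ : TPath lab) (L : List (TPath lab))
    (A : Finset V) : Prop :=
  P₀.verts 0 = v ∧
  (∀ P ∈ P₀ :: L, P.vertexSet ⊆ subT lab v) ∧
  (∀ w ∈ subT lab v, ∃ P ∈ P₀ :: L, w ∈ P.vertexSet) ∧
  ((P₀ :: L).Pairwise fun P Q => Disjoint P.vertexSet Q.vertexSet) ∧
  A.card = L.length + 1 ∧
  ↑A ⊆ subT lab v ∧
  IsTempAntichain lab ↑A ∧
  (∀ a ∈ A, ∀ Q : TPath lab, Q.FromTo v a → ∀ h : 0 < Q.len,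
    ((Q.times ⟨0, h⟩ : ℕ) : ℕ∞) ≤ P₀.hd) ∧
  (v ∈ A → P₀.len = 0)

variable {lab : V → V → Finset ℕ} {r : V}

lemma exists_goodAt (horient : ∀ u v : V, (lab u v).Nonempty → lab v u = ∅)
    (htree : (underlyingGraph lab).IsTree)
    (hroot : ∀ v : V, Relation.ReflTransGen (Arc lab) r v) :
    ∀ (n : ℕ) (v : V), (subT lab v).ncard ≤ n →
      ∃ P₀ L A, GoodAt lab v P₀ L A := by
  intro n
  induction n with
  | zero =>
    intro v hv
    exfalso
    have : 0 < (subT lab v).ncard :=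
      (Set.ncard_pos (Set.toFinite _)).mpr ⟨v, mem_subT_self v⟩
    omega
  | succ n ih =>
    intro p hcard
    classical
    set cs : Finset V := Finset.univ.filter (fun c => (lab p c).Nonempty) with hcs
    have hmem_cs : ∀ c : V, c ∈ cs ↔ Arc lab p c := by
      intro c; simp [hcs, Arc]
    have hchild : ∀ c : V, ∃ (P₀ : TPath lab) (L : List (TPath lab)) (A : Finset V),
        Arc lab p c → GoodAt lab c P₀ L A := by
      intro c
      by_cases hc : Arc lab p c
      · obtain ⟨P₀, L, A, hg⟩ := ih c (by
          have h1 := sub_ncard_lt horient htree hroot hc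
          omega)
        exact ⟨P₀, L, A, fun _ => hg⟩
      · exact ⟨TPath.triv lab c, [], {c}, fun h => absurd h hc⟩
    choose Pf Lf Af hGf using hchild
    have hGf' : ∀ c ∈ cs, GoodAt lab c (Pf c) (Lf c) (Af c) :=
      fun c hc => hGf c ((hmem_cs c).mp hc)
    have hg1 := fun c (hc : c ∈ cs) => (hGf' c hc).1
    have hg2 := fun c (hc : c ∈ cs) => (hGf' c hc).2.1
    have hg3 := fun c (hc : c ∈ cs) => (hGf' c hc).2.2.1
    have hg4 := fun c (hc : c ∈ cs) => (hGf' c hc).2.2.2.1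
    have hg5 := fun c (hc : c ∈ cs) => (hGf' c hc).2.2.2.2.1
    have hg6 := fun c (hc : c ∈ cs) => (hGf' c hc).2.2.2.2.2.1
    have hg7 := fun c (hc : c ∈ cs) => (hGf' c hc).2.2.2.2.2.2.1
    have hg8 := fun c (hc : c ∈ cs) => (hGf' c hc).2.2.2.2.2.2.2.1
    have hg9 := fun c (hc : c ∈ cs) => (hGf' c hc).2.2.2.2.2.2.2.2
    have hsub_c : ∀ c ∈ cs, subT lab c ⊆ subT lab p :=
      fun c hc => sub_mono ((hmem_cs c).mp hc)
    have hp_not : ∀ c ∈ cs, p ∉ subT lab c :=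
      fun c hc => not_mem_sub horient htree hroot ((hmem_cs c).mp hc)
    have hdisj_sub : ∀ c ∈ cs, ∀ c' ∈ cs, c ≠ c' → ∀ x, x ∈ subT lab c → x ∈ subT lab c' → False := by
      intro c hc c' hc' hne x hx1 hx2
      exact hne (sibling_eq horient htree hroot ((hmem_cs c).mp hc) ((hmem_cs c').mp hc') hx1 hx2)
    -- the combined cover list of the children in ds
    set Jl : Finset V → List (TPath lab) :=
      fun ds => ((ds.attach.toList).map (fun c => Pf c.1 :: Lf c.1)).flatten with hJl
    have hJmem : ∀ ds : Finset V, ∀ P : TPath lab,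
        P ∈ Jl ds ↔ ∃ c ∈ ds, P ∈ Pf c :: Lf c := by
      intro ds P
      rw [hJl]
      simp only [List.mem_flatten, List.mem_map]
      constructor
      · rintro ⟨l, ⟨c, hc, rfl⟩, hPl⟩
        exact ⟨c.1, c.2, hPl⟩
      · rintro ⟨c, hc, hP⟩
        exact ⟨Pf c :: Lf c, ⟨⟨c, hc⟩, by simp, rfl⟩, hP⟩
    have hJlen : ∀ ds : Finset V, (Jl ds).length = ∑ c ∈ ds, ((Lf c).length + 1) := by
      intro ds
      rw [hJl]
      rw [List.length_flatten, List.map_map]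
      have he : (List.length ∘ fun c : {x // x ∈ ds} => Pf c.1 :: Lf c.1)
          = fun c : {x // x ∈ ds} => (Lf c.1).length + 1 := rfl
      rw [he, Finset.sum_map_toList, Finset.sum_attach ds (fun c => (Lf c).length + 1)]
    have hJsub : ∀ ds : Finset V, (∀ c ∈ ds, c ∈ cs) →
        ∀ P ∈ Jl ds, ∃ c, c ∈ ds ∧ P.vertexSet ⊆ subT lab c := by
      intro ds hds P hP
      obtain ⟨c, hc, hPc⟩ := (hJmem ds P).mp hP
      exact ⟨c, hc, hg2 c (hds c hc) P hPc⟩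
    have hJpair : ∀ ds : Finset V, (∀ c ∈ ds, c ∈ cs) →
        (Jl ds).Pairwise (fun P Q => Disjoint P.vertexSet Q.vertexSet) := by
      intro ds hds
      rw [hJl, List.pairwise_flatten]
      constructor
      · rintro l hl
        rw [List.mem_map] at hl
        obtain ⟨c, hc, rfl⟩ := hl
        exact hg4 c.1 (hds c.1 c.2)
      · rw [List.pairwise_map]
        have hnd : ds.attach.toList.Pairwise (· ≠ ·) := Finset.nodup_toList ds.attach
        refine hnd.imp ?_
        intro a b hab P hP Q hQ
        have ha := hg2 a.1 (hds a.1 a.2) P hP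
        have hb := hg2 b.1 (hds b.1 b.2) Q hQ
        rw [Set.disjoint_left]
        intro x hx hx'
        exact hdisj_sub a.1 (hds a.1 a.2) b.1 (hds b.1 b.2)
          (fun h => hab (Subtype.ext h)) x (ha hx) (hb hx')
    -- antichain properties of the union of the children antichains
    have hAsub : ∀ c ∈ cs, ↑(Af c) ⊆ subT lab c := fun c hc => hg6 c hc
    have hAcard : (cs.biUnion Af).card = ∑ c ∈ cs, ((Lf c).length + 1) := by
      rw [Finset.card_biUnion]
      · exact Finset.sum_congr rfl (fun c hc => hg5 c hc)
      · intro c hc c' hc' hne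
        rw [Function.onFun, Finset.disjoint_left]
        intro a ha ha'
        exact hdisj_sub c hc c' hc' hne a (hAsub c hc ha) (hAsub c' hc' ha')
    have hAp : ↑(cs.biUnion Af) ⊆ subT lab p := by
      intro a ha
      obtain ⟨c, hc, hac⟩ := Finset.mem_biUnion.mp (Finset.mem_coe.mp ha)
      exact hsub_c c hc (hAsub c hc hac)
    have hpnotA : p ∉ cs.biUnion Af := by
      intro hp
      obtain ⟨c, hc, hpc⟩ := Finset.mem_biUnion.mp hp
      exact hp_not c hc (hAsub c hc hpc)
    have hanti : IsTempAntichain lab ↑(cs.biUnion Af) := by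
      intro a ha b hb hab hconn
      obtain ⟨c, hc, hac⟩ := Finset.mem_biUnion.mp (Finset.mem_coe.mp ha)
      obtain ⟨c', hc', hbc⟩ := Finset.mem_biUnion.mp (Finset.mem_coe.mp hb)
      by_cases hcc : c = c'
      · subst hcc
        exact hg7 c hc (Finset.mem_coe.mpr hac) (Finset.mem_coe.mpr hbc) hab hconn
      · have h1 : a ∈ subT lab c := hAsub c hc hac
        have h2 : b ∈ subT lab c' := hAsub c' hc' hbc
        rcases hconn.reflTransGen with h | h
        · exact hdisj_sub c hc c' hc' hcc b (Relation.ReflTransGen.trans h1 h) h2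
        · exact hdisj_sub c hc c' hc' hcc a h1 (Relation.ReflTransGen.trans h2 h)
    -- key decomposition of temporal paths from p to a member of a child antichain
    have hkey : ∀ c ∈ cs, ∀ a ∈ Af c, ∀ Q : TPath lab, Q.FromTo p a → ∀ h : 0 < Q.len,
        Q.times ⟨0, h⟩ ∈ lab p c ∧ ((Q.times ⟨0, h⟩ : ℕ) : ℕ∞) < (Pf c).hd := by
      intro c hc a ha Q hQ h
      have h1lt : 1 < Q.len + 1 := by omega
      have hmem := Q.head_mem h
      rw [hQ.1] at hmem
      have hchain : Relation.ReflTransGen (Arc lab) (Q.verts ⟨1, h1lt⟩) a := by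
        have hle : (⟨1, h1lt⟩ : Fin (Q.len + 1)) ≤ Fin.last Q.len := by
          rw [Fin.le_def]; simp [Fin.last]; omega
        have := Q.chain ⟨1, h1lt⟩ (Fin.last Q.len) hle
        rwa [hQ.2] at this
      have harc' : Arc lab p (Q.verts ⟨1, h1lt⟩) := ⟨_, hmem⟩
      have hceq : Q.verts ⟨1, h1lt⟩ = c := by
        refine sibling_eq horient htree hroot harc' ((hmem_cs c).mp hc) hchain ?_
        exact hAsub c hc ha
      rw [hceq] at hmem
      refine ⟨hmem, ?_⟩
      by_cases hlen : Q.len = 1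
      · -- then a = c, and c ∈ Af c forces the child head path to be trivial
        have hlast : Fin.last Q.len = (⟨1, h1lt⟩ : Fin (Q.len + 1)) := by
          ext; simp [Fin.last, hlen]
        have hac : a = c := by rw [← hQ.2, hlast, hceq]
        have h9 := hg9 c hc (by rwa [hac] at ha)
        have : (Pf c).hd = ⊤ := by simp [TPath.hd, h9]
        rw [this]
        exact WithTop.coe_lt_top _
      · -- the tail of Q is a temporal path from c to a
        have h2le : 2 ≤ Q.len := by omega
        have hle : (⟨1, h1lt⟩ : Fin (Q.len + 1)) ≤ Fin.last Q.len := by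
          rw [Fin.le_def]; simp [Fin.last]; omega
        have hQ'len : 0 < (Q.subpath ⟨1, h1lt⟩ (Fin.last Q.len) hle).len := by
          rw [TPath.subpath_len]
          simp [Fin.last]
          omega
        have hQ'from : (Q.subpath ⟨1, h1lt⟩ (Fin.last Q.len) hle).FromTo c a := by
          constructor
          · rw [TPath.subpath_verts_zero, hceq]
          · rw [TPath.subpath_verts_last, hQ.2]
        have hinv := hg8 c hc a ha _ hQ'from hQ'len
        rw [TPath.subpath_times_zero] at hinv
        refine lt_of_lt_of_le ?_ hinv
        exact_mod_cast Q.mono (by simp [Fin.lt_def])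
    -- the set of feasible extension times
    set F : Finset ℕ :=
      cs.biUnion (fun c => (lab p c).filter (fun s => ((s : ℕ) : ℕ∞) < (Pf c).hd)) with hFdef
    by_cases hFne : F.Nonempty
    · -- feasible case: extend the head path of the best child
      obtain ⟨ci, hci, hsi⟩ := Finset.mem_biUnion.mp (F.max'_mem hFne)
      rw [Finset.mem_filter] at hsi
      have hpnotP : p ∉ (Pf ci).vertexSet :=
        fun hmem => hp_not ci hci (hg2 ci hci (Pf ci) (List.mem_cons_self) hmem)
      have hszero : F.max' hFne ∈ lab p ((Pf ci).verts 0) := by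
        rw [hg1 ci hci]; exact hsi.1
      have hslt : ∀ hh : 0 < (Pf ci).len, F.max' hFne < (Pf ci).times ⟨0, hh⟩ := by
        intro hh
        have h2 := hsi.2
        rw [TPath.hd_of_pos _ hh] at h2
        exact_mod_cast h2
      refine ⟨(Pf ci).cons p (F.max' hFne) hpnotP hszero hslt,
        Lf ci ++ Jl (cs.erase ci), cs.biUnion Af, rfl, ?_, ?_, ?_, ?_, hAp, hanti, ?_, ?_⟩
      · -- all paths inside the subtree of p
        intro P hP
        rcases List.mem_cons.mp hP with rfl | hP'
        · rw [TPath.cons_vertexSet]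
          intro x hx
          rcases Set.mem_insert_iff.mp hx with rfl | hx'
          · exact mem_subT_self _
          · exact hsub_c ci hci (hg2 ci hci (Pf ci) (List.mem_cons_self) hx')
        · rcases List.mem_append.mp hP' with hP2 | hP2
          · exact (hg2 ci hci P (List.mem_cons_of_mem _ hP2)).trans (hsub_c ci hci)
          · obtain ⟨c, hc, hPc⟩ := hJsub (cs.erase ci) (fun c hc => Finset.mem_of_mem_erase hc) P hP2
            exact hPc.trans (hsub_c c (Finset.mem_of_mem_erase hc))
      · -- cover
        intro w hw
        rcases sub_decomp horient htree hroot hw with rfl | ⟨c, hc, hwc⟩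
        · refine ⟨_, List.mem_cons_self, ?_⟩
          rw [TPath.cons_vertexSet]
          exact Set.mem_insert _ _
        · have hccs : c ∈ cs := (hmem_cs c).mpr hc
          by_cases hcci : c = ci
          · subst hcci
            obtain ⟨P, hP, hwP⟩ := hg3 c hccs w hwc
            rcases List.mem_cons.mp hP with rfl | hP'
            · refine ⟨_, List.mem_cons_self, ?_⟩
              rw [TPath.cons_vertexSet]
              exact Set.mem_insert_of_mem _ hwP
            · exact ⟨P, List.mem_cons_of_mem _ (List.mem_append_left _ hP'), hwP⟩
          · obtain ⟨P, hP, hwP⟩ := hg3 c hccs w hwc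
            refine ⟨P, List.mem_cons_of_mem _ (List.mem_append_right _ ?_), hwP⟩
            exact (hJmem _ P).mpr ⟨c, Finset.mem_erase.mpr ⟨hcci, hccs⟩, hP⟩
      · -- pairwise disjointness
        rw [List.pairwise_cons]
        constructor
        · intro Q hQ
          rw [TPath.cons_vertexSet, Set.disjoint_left]
          rintro x (rfl | hx') hxQ
          · rcases List.mem_append.mp hQ with hQ2 | hQ2
            · exact hp_not ci hci (hg2 ci hci Q (List.mem_cons_of_mem _ hQ2) hxQ)
            · obtain ⟨c, hc, hQc⟩ := hJsub (cs.erase ci) (fun c hc => Finset.mem_of_mem_erase hc) Q hQ2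
              exact hp_not c (Finset.mem_of_mem_erase hc) (hQc hxQ)
          · rcases List.mem_append.mp hQ with hQ2 | hQ2
            · have hpw := hg4 ci hci
              rw [List.pairwise_cons] at hpw
              exact Set.disjoint_left.mp (hpw.1 Q hQ2) hx' hxQ
            · obtain ⟨c, hc, hQc⟩ := hJsub (cs.erase ci) (fun c hc => Finset.mem_of_mem_erase hc) Q hQ2
              have h1 : x ∈ subT lab ci := hg2 ci hci (Pf ci) (List.mem_cons_self) hx'
              exact absurd (hQc hxQ) (fun h2 => hdisj_sub ci hci c
                (Finset.mem_of_mem_erase hc) (Ne.symm (Finset.ne_of_mem_erase hc)) x h1 h2)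
        · rw [List.pairwise_append]
          refine ⟨?_, hJpair _ (fun c hc => Finset.mem_of_mem_erase hc), ?_⟩
          · have hpw := hg4 ci hci
            rw [List.pairwise_cons] at hpw
            exact hpw.2
          · intro P hP Q hQ
            obtain ⟨c, hc, hQc⟩ := hJsub (cs.erase ci) (fun c hc => Finset.mem_of_mem_erase hc) Q hQ
            have hPc : P.vertexSet ⊆ subT lab ci := hg2 ci hci P (List.mem_cons_of_mem _ hP)
            rw [Set.disjoint_left]
            intro x hx hx'
            exact hdisj_sub ci hci c (Finset.mem_of_mem_erase hc)
              (Ne.symm (Finset.ne_of_mem_erase hc)) x (hPc hx) (hQc hx')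
      · -- cardinality
        rw [hAcard, List.length_append, hJlen]
        have h5 : ∑ c ∈ cs.erase ci, ((Lf c).length + 1) + ((Lf ci).length + 1)
            = ∑ c ∈ cs, ((Lf c).length + 1) := Finset.sum_erase_add _ _ hci
        omega
      · -- the time invariant
        intro a ha Q hQ h
        obtain ⟨c, hc, hac⟩ := Finset.mem_biUnion.mp ha
        obtain ⟨htm, hlt⟩ := hkey c hc a hac Q hQ h
        have hmemF : Q.times ⟨0, h⟩ ∈ F := by
          rw [hFdef]
          exact Finset.mem_biUnion.mpr ⟨c, hc, Finset.mem_filter.mpr ⟨htm, hlt⟩⟩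
        have hle := F.le_max' _ hmemF
        rw [TPath.cons_hd]
        exact_mod_cast hle
      · -- p is not in the antichain
        intro hp
        exact absurd hp hpnotA
    · -- infeasible case: p starts a new trivial path and joins the antichain
      have hnofeas : ∀ c ∈ cs, ∀ t ∈ lab p c, ¬ (((t : ℕ) : ℕ∞) < (Pf c).hd) := by
        intro c hc t ht hlt
        exact hFne ⟨t, by rw [hFdef]; exact Finset.mem_biUnion.mpr ⟨c, hc, Finset.mem_filter.mpr ⟨ht, hlt⟩⟩⟩
      have hpa : ∀ c ∈ cs, ∀ a ∈ Af c, ¬ TempConnected lab p a := by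
        intro c hc a ha hconn
        have hane : p ≠ a := fun h => hp_not c hc (h ▸ hAsub c hc ha)
        rcases hconn.exists_fromTo hane with ⟨Q, hQ, hl⟩ | ⟨Q, hQ, hl⟩
        · obtain ⟨htm, hlt⟩ := hkey c hc a ha Q hQ hl
          exact hnofeas c hc _ htm hlt
        · -- a temporal path from a to p would ascend the tree
          have h1 : Relation.ReflTransGen (Arc lab) a p := by
            have := Q.chain 0 (Fin.last Q.len) (Fin.zero_le _)
            rwa [hQ.1, hQ.2] at this
          have h2 : a ∈ subT lab c := hAsub c hc ha
          have h3 := rtg_dist_le horient htree hroot (Relation.ReflTransGen.trans h2 h1)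
          have h4 := arc_dist_lt horient htree hroot _ _ ((hmem_cs c).mp hc)
          omega
      refine ⟨TPath.triv lab p, Jl cs, insert p (cs.biUnion Af), rfl, ?_, ?_, ?_, ?_, ?_, ?_, ?_, ?_⟩
      · intro P hP
        rcases List.mem_cons.mp hP with rfl | hP'
        · rw [TPath.triv_vertexSet]
          rintro x rfl
          exact mem_subT_self _
        · obtain ⟨c, hc, hPc⟩ := hJsub cs (fun c hc => hc) P hP'
          exact hPc.trans (hsub_c c hc)
      · intro w hw
        rcases sub_decomp horient htree hroot hw with rfl | ⟨c, hc, hwc⟩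
        · exact ⟨_, List.mem_cons_self, by rw [TPath.triv_vertexSet]; rfl⟩
        · have hccs : c ∈ cs := (hmem_cs c).mpr hc
          obtain ⟨P, hP, hwP⟩ := hg3 c hccs w hwc
          exact ⟨P, List.mem_cons_of_mem _ ((hJmem _ P).mpr ⟨c, hccs, hP⟩), hwP⟩
      · rw [List.pairwise_cons]
        refine ⟨?_, hJpair cs (fun c hc => hc)⟩
        intro Q hQ
        rw [TPath.triv_vertexSet, Set.disjoint_left]
        rintro x rfl hxQ
        obtain ⟨c, hc, hQc⟩ := hJsub cs (fun c hc => hc) Q hQ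
        exact hp_not c hc (hQc hxQ)
      · rw [Finset.card_insert_of_notMem hpnotA, hAcard, hJlen]
      · intro a ha
        rcases Finset.mem_insert.mp (Finset.mem_coe.mp ha) with rfl | ha'
        · exact mem_subT_self a
        · exact hAp ha'
      · -- antichain including p
        intro a ha b hb hab hconn
        rcases Finset.mem_insert.mp (Finset.mem_coe.mp ha) with rfl | ha'
        · rcases Finset.mem_insert.mp (Finset.mem_coe.mp hb) with rfl | hb'
          · exact hab rfl
          · obtain ⟨c, hc, hbc⟩ := Finset.mem_biUnion.mp hb'
            exact hpa c hc b hbc hconn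
        · rcases Finset.mem_insert.mp (Finset.mem_coe.mp hb) with rfl | hb'
          · obtain ⟨c, hc, hac⟩ := Finset.mem_biUnion.mp ha'
            exact hpa c hc a hac (hconn.imp (fun P hP => ⟨hP.2, hP.1⟩))
          · exact hanti (Finset.mem_coe.mpr ha') (Finset.mem_coe.mpr hb') hab hconn
      · intro a ha Q hQ h
        simp [TPath.hd]
      · intro _
        rfl

end Main

/-- Temporal rooted directed trees satisfy the Dilworth and TD-Dilworth properties. -/
theorem rooted_tree_dilworth {V : Type*} [Fintype V] (lab : V → V → Finset ℕ)
    (hpos : PositiveLabels lab) (htree : IsTemporalOrientedTree lab)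
    (hroot : ∃ r : V, ∀ v : V, Relation.ReflTransGen (fun a b => (lab a b).Nonempty) r v) :
    ∃ k : ℕ, IsLeast (tdpcSizes lab) k ∧ IsLeast (tpcSizes lab) k ∧
      IsGreatest (antichainSizes lab) k := by
  classical
  obtain ⟨r, hroot⟩ := hroot
  obtain ⟨htree1, horient⟩ := htree
  have hroot' : ∀ v : V, Relation.ReflTransGen (Arc lab) r v := hroot
  obtain ⟨P₀, L, A, hg⟩ := exists_goodAt horient htree1 hroot' (subT lab r).ncard r le_rfl
  obtain ⟨hg1, hg2, hg3, hg4, hg5, hg6, hg7, hg8, hg9⟩ := hg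
  set C : Fin (L.length + 1) → TPath lab := fun i => (P₀ :: L).get i with hC
  have hCov : IsTPC lab C := by
    intro v
    obtain ⟨P, hP, hvP⟩ := hg3 v (hroot' v)
    obtain ⟨i, hi⟩ := List.mem_iff_get.mp hP
    refine ⟨i, ?_⟩
    rw [hC]
    simp only []
    rw [hi]
    exact hvP
  have hdisjC : ∀ i j : Fin (L.length + 1), i ≠ j →
      Disjoint (C i).vertexSet (C j).vertexSet := by
    intro i j hij
    have hpg := List.pairwise_iff_get.mp hg4
    rcases lt_or_gt_of_ne hij with h | h
    · exact hpg i j h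
    · exact (hpg j i h).symm
  have hTD : ∀ i j : Fin (L.length + 1), i ≠ j → TDisjoint (C i) (C j) := by
    intro i j hij a b hor
    intro _
    rcases hor with h | h | h | h
    · exact Set.disjoint_left.mp (hdisjC i j hij) ⟨_, rfl⟩ ⟨_, h.symm⟩
    · exact Set.disjoint_left.mp (hdisjC i j hij) ⟨_, rfl⟩ ⟨_, h.symm⟩
    · exact Set.disjoint_left.mp (hdisjC i j hij) ⟨_, rfl⟩ ⟨_, h.symm⟩
    · exact Set.disjoint_left.mp (hdisjC i j hij) ⟨_, rfl⟩ ⟨_, h.symm⟩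
  have easy : ∀ a ∈ antichainSizes lab, ∀ m ∈ tpcSizes lab, a ≤ m := by
    rintro a ⟨S, rfl, hS⟩ m ⟨D, hD⟩
    have hf : ∀ s : V, ∃ i : Fin m, s ∈ (D i).vertexSet := hD
    choose f hf using hf
    have hinj : Set.InjOn f ↑S := by
      intro x hx y hy hxy
      by_contra hne
      exact hS hx hy hne ⟨D (f x), hf x, by rw [hxy]; exact hf y⟩
    calc S.card = (S.image f).card := (Finset.card_image_of_injOn hinj).symm
      _ ≤ (Finset.univ : Finset (Fin m)).card := Finset.card_le_card (Finset.subset_univ _)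
      _ = m := by simp
  have hmemTD : (L.length + 1) ∈ tdpcSizes lab := ⟨C, hCov, hTD⟩
  have hmemTPC : (L.length + 1) ∈ tpcSizes lab := ⟨C, hCov⟩
  have hmemA : (L.length + 1) ∈ antichainSizes lab := ⟨A, hg5, hg7⟩
  have hsub : tdpcSizes lab ⊆ tpcSizes lab := by
    rintro m ⟨D, hD, -⟩
    exact ⟨D, hD⟩
  exact ⟨L.length + 1, ⟨hmemTD, fun m hm => easy _ hmemA m (hsub hm)⟩,
    ⟨hmemTPC, fun m hm => easy _ hmemA m hm⟩,
    hmemA, fun a ha => easy a ha _ hmemTPC⟩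
end
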